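/- arXiv:1008.2686 — 4 statements merged into one kernel-verified Lean document; each statement's English description precedes it below -/
import Mathlib

section
/- (Feller property) For every finite Δ ⊂ ℤ^d, every J ∈ 𝒥_q, and every bounded continuous function f : ℝ^{ℤ^d} → ℝ, the function ξ ↦ ∫_{ℝ^{ℤ^d}} f(σ) π_Δ(dσ|J,ξ) is again a bounded continuous function on ℝ^{ℤ^d} (with the product topology). -/
open MeasureTheory ENNReal Filter Topology

noncomputable section

/-- The lattice `ℤ^d`. -/
abbrev Site (d : ℕ) : Type := Fin d → ℤ

/-- Spin configurations `ℝ^{ℤ^d}` (product topology, product σ-field). -/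
abbrev Config (d : ℕ) : Type := Site d → ℝ

/-- An edge of `ℤ^d`, encoded by its lower endpoint `x` and a direction `i`:
it joins `x` and `x + eᵢ`.  Every nearest-neighbour edge has a unique such encoding. -/
abbrev Edge (d : ℕ) : Type := Site d × Fin d

namespace Paper

/-- the σ-field `ℬ(𝒫(·))` (for a Polish state space it coincides with the Borel σ-field
of the weak topology). -/
instance instMeasurableSpaceProbabilityMeasure {Ω : Type*} [MeasurableSpace Ω] :
    MeasurableSpace (ProbabilityMeasure Ω) := by
  unfold ProbabilityMeasure; infer_instance

variable (d : ℕ)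

/-- the `i`-th unit vector of `ℤ^d` -/
def unitv (i : Fin d) : Site d := fun j => if j = i then 1 else 0

/-- the second endpoint of an edge -/
def ept (e : Edge d) : Site d := e.1 + unitv d e.2

/-- the neighbours of a site (the `y` with `|x - y| = 1`) -/
def nbrs (x : Site d) : Finset (Site d) :=
  (Finset.univ.image fun i : Fin d => x + unitv d i) ∪
    (Finset.univ.image fun i : Fin d => x - unitv d i)

/-- the edges incident to a site -/
def nbrEdges (x : Site d) : Finset (Edge d) :=
  (Finset.univ.image fun i : Fin d => ((x, i) : Edge d)) ∪
    (Finset.univ.image fun i : Fin d => ((x - unitv d i, i) : Edge d))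

/-- the edges having at least one endpoint in `Δ` -/
def edgesIn (Δ : Finset (Site d)) : Finset (Edge d) := Δ.biUnion (nbrEdges d)

/-- the outer boundary `∂Δ` -/
def bdry (Δ : Finset (Site d)) : Finset (Site d) := (Δ.biUnion (nbrs d)) \ Δ

/-- the configuration `σ_Δ × ξ_{Δᶜ}` -/
def glue (Δ : Finset (Site d)) (σ : (x : Δ) → ℝ) (ξ : Config d) : Config d :=
  fun x => if h : x ∈ Δ then σ ⟨x, h⟩ else ξ x

/-- minus the interaction energy, `-H_Δ(σ_Δ | J, ξ)` -/
def energy (Δ : Finset (Site d)) (J : Edge d → ℝ) (σ : (x : Δ) → ℝ) (ξ : Config d) : ℝ :=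
  ∑ e ∈ edgesIn d Δ, J e * glue d Δ σ ξ e.1 * glue d Δ σ ξ (ept d e)

variable (χ : Site d → Measure ℝ) [∀ x, SigmaFinite (χ x)]

/-- the product reference measure `⊗_{x ∈ Δ} χ_x` on `ℝ^Δ` -/
def refMeas (Δ : Finset (Site d)) : Measure ((x : Δ) → ℝ) := Measure.pi fun x : Δ => χ x.1

/-- the partition function `Z_Δ(J, ξ)` -/
def Zpart (Δ : Finset (Site d)) (J : Edge d → ℝ) (ξ : Config d) : ℝ≥0∞ :=
  ∫⁻ σ, ENNReal.ofReal (Real.exp (energy d Δ J σ ξ)) ∂(refMeas d χ Δ)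

/-- the local (conditional) Gibbs measure `π_Δ(·|J,ξ)` on `ℝ^{ℤ^d}` -/
def gibbsKernel (Δ : Finset (Site d)) (J : Edge d → ℝ) (ξ : Config d) : Measure (Config d) :=
  (Zpart d χ Δ J ξ)⁻¹ •
    Measure.map (fun σ => glue d Δ σ ξ)
      ((refMeas d χ Δ).withDensity fun σ => ENNReal.ofReal (Real.exp (energy d Δ J σ ξ)))

open scoped Classical in
/-- `π_Δ(·|J,ξ)` as an element of `𝒫(ℝ^{ℤ^d})`; under the standing assumptions the
local Gibbs measure is indeed a probability measure, so the `dite` branch is the real one. -/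
def gibbsPK (Δ : Finset (Site d)) (J : Edge d → ℝ) (ξ : Config d) :
    ProbabilityMeasure (Config d) :=
  if h : IsProbabilityMeasure (gibbsKernel d χ Δ J ξ) then ⟨gibbsKernel d χ Δ J ξ, h⟩
  else ⟨Measure.dirac 0, by infer_instance⟩

variable (w : Site d → ℝ) (p q : ℝ)

/-- `‖σ‖_p^p` -/
def pnormP (σ : Config d) : ℝ := ∑' x, |σ x| ^ p * w x

/-- the set `𝒮_p` of tempered configurations -/
def SpSet : Set (Config d) := {σ : Config d | Summable fun x => |σ x| ^ p * w x}

/-- the weight `w x + w y` attached to an edge -/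
def eWt (e : Edge d) : ℝ := w e.1 + w (ept d e)

/-- `‖J‖_q^q` -/
def JnormQ (J : Edge d → ℝ) : ℝ := ∑' e, |J e| ^ q * eWt d w e

/-- the set `𝒥_q` of tempered interactions -/
def JqSet : Set (Edge d → ℝ) := {J : Edge d → ℝ | Summable fun e => |J e| ^ q * eWt d w e}

/-- `𝒥_q` as a (measurable) space: its Borel σ-field coincides with the trace of the
product σ-field of `ℝ^E`. -/
abbrev JqT : Type := {J : Edge d → ℝ // Summable fun e => |J e| ^ q * eWt d w e}

/-- `C₊(λ) = sup_x ∫ exp(λ|u|^p) χ_x(du)` -/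
def Cplus (l : ℝ) : ℝ≥0∞ := ⨆ x : Site d, ∫⁻ u, ENNReal.ofReal (Real.exp (l * |u| ^ p)) ∂(χ x)

/-- `C₋(λ) = inf_x ∫ exp(-λ|u|^p) χ_x(du)` -/
def Cminus (l : ℝ) : ℝ≥0∞ := ⨅ x : Site d, ∫⁻ u, ENNReal.ofReal (Real.exp (-(l * |u| ^ p))) ∂(χ x)

/-- the set `𝒢_p(J)` of tempered Gibbs measures -/
def GibbsSet (J : Edge d → ℝ) : Set (ProbabilityMeasure (Config d)) :=
  {μ : ProbabilityMeasure (Config d) |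
    (μ : Measure (Config d)) (SpSet d w p) = 1 ∧
      ∀ (Δ : Finset (Site d)) (A : Set (Config d)), MeasurableSet A →
        ∫⁻ ξ, (gibbsKernel d χ Δ J ξ) A ∂(μ : Measure (Config d)) = (μ : Measure (Config d)) A}

/-- the local pressure `p_Δ(J,ξ)` -/
def pressure (Δ : Finset (Site d)) (J : Edge d → ℝ) (ξ : Config d) : ℝ :=
  ((Δ.card : ℝ))⁻¹ * Real.log (Zpart d χ Δ J ξ).toReal

/-- `p̄^μ_Δ(J)` -/
def pbar (Δ : Finset (Site d)) (μ : Measure (Config d)) (J : Edge d → ℝ) : ℝ :=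
  ∫ ξ, pressure d χ Δ J ξ ∂μ

/-- a cofinal (exhausting, increasing) sequence of finite volumes -/
def Cofinal (D : ℕ → Finset (Site d)) : Prop :=
  (∀ n, (D n).Nonempty) ∧ (∀ n, D n ⊆ D (n + 1)) ∧ ∀ x : Site d, ∃ n, x ∈ D n

/-- a random Gibbs measure -/
def IsRandomGibbs (ν : Measure (JqT d w q)) (μm : JqT d w q → ProbabilityMeasure (Config d)) :
    Prop :=
  Measurable μm ∧ ∀ᵐ J ∂ν, μm J ∈ GibbsSet d χ w p J.1

end Paper

open Paper
section FellerAux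

open Paper Real

variable {d : ℕ} (Δ : Finset (Site d)) (J : Edge d → ℝ)

/-- sites relevant for the energy in `Δ` -/
def VV : Finset (Site d) := (edgesIn d Δ).image Prod.fst ∪ (edgesIn d Δ).image (ept d)

def BB (ξ : Config d) : ℝ := ∑ x ∈ VV Δ, |ξ x|

def KK (ξ : Config d) : ℝ := (∑ e ∈ edgesIn d Δ, |J e|) * (1 + BB Δ ξ) ^ 2

def SS (σ : (x : Δ) → ℝ) : ℝ := ∑ x : Δ, |σ x|

lemma BB_nonneg (ξ : Config d) : 0 ≤ BB Δ ξ :=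
  Finset.sum_nonneg fun _ _ => abs_nonneg _

lemma SS_nonneg (σ : (x : Δ) → ℝ) : 0 ≤ SS Δ σ :=
  Finset.sum_nonneg fun _ _ => abs_nonneg _

lemma KK_nonneg (ξ : Config d) : 0 ≤ KK Δ J ξ :=
  mul_nonneg (Finset.sum_nonneg fun _ _ => abs_nonneg _) (sq_nonneg _)

lemma continuous_BB : Continuous (BB Δ) :=
  continuous_finset_sum _ fun x _ => (continuous_apply x).abs

lemma continuous_KK : Continuous (KK Δ J) :=
  continuous_const.mul ((continuous_const.add (continuous_BB Δ)).pow 2)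

lemma continuous_glue_sigma (ξ : Config d) :
    Continuous fun σ : (x : Δ) → ℝ => glue d Δ σ ξ := by
  refine continuous_pi fun x => ?_
  unfold glue
  by_cases h : x ∈ Δ
  · simpa [h] using continuous_apply (⟨x, h⟩ : Δ)
  · simp only [h, dif_neg, not_false_iff]
    exact continuous_const

lemma continuous_glue_xi (σ : (x : Δ) → ℝ) :
    Continuous fun ξ : Config d => glue d Δ σ ξ := by
  refine continuous_pi fun x => ?_
  unfold glue
  by_cases h : x ∈ Δ
  · simp only [h, dif_pos]; exact continuous_const
  · simp only [h, dif_neg, not_false_iff]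
    exact continuous_apply x

lemma measurable_glue_sigma (ξ : Config d) :
    Measurable fun σ : (x : Δ) → ℝ => glue d Δ σ ξ := by
  refine measurable_pi_lambda _ fun x => ?_
  unfold glue
  by_cases h : x ∈ Δ
  · simpa [h] using measurable_pi_apply (⟨x, h⟩ : Δ)
  · simp only [h, dif_neg, not_false_iff]
    exact measurable_const

lemma continuous_energy_sigma (ξ : Config d) :
    Continuous fun σ : (x : Δ) → ℝ => energy d Δ J σ ξ := by
  refine continuous_finset_sum _ fun e _ => ?_
  exact (continuous_const.mul
    ((continuous_apply e.1).comp (continuous_glue_sigma Δ ξ))).mul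
    ((continuous_apply (ept d e)).comp (continuous_glue_sigma Δ ξ))

lemma continuous_energy_xi (σ : (x : Δ) → ℝ) :
    Continuous fun ξ : Config d => energy d Δ J σ ξ := by
  refine continuous_finset_sum _ fun e _ => ?_
  exact (continuous_const.mul
    ((continuous_apply e.1).comp (continuous_glue_xi Δ σ))).mul
    ((continuous_apply (ept d e)).comp (continuous_glue_xi Δ σ))

lemma abs_glue_le (ξ : Config d) (σ : (x : Δ) → ℝ) {x : Site d} (hx : x ∈ VV Δ) :
    |glue d Δ σ ξ x| ≤ (1 + BB Δ ξ) * (1 + SS Δ σ) := by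
  have hB := BB_nonneg Δ ξ
  have hS := SS_nonneg Δ σ
  unfold glue
  by_cases h : x ∈ Δ
  · simp only [h, dif_pos]
    have : |σ ⟨x, h⟩| ≤ SS Δ σ :=
      Finset.single_le_sum (f := fun y : Δ => |σ y|) (fun _ _ => abs_nonneg _)
        (Finset.mem_univ _)
    nlinarith
  · simp only [h, dif_neg, not_false_iff]
    have : |ξ x| ≤ BB Δ ξ :=
      Finset.single_le_sum (f := fun y => |ξ y|) (fun _ _ => abs_nonneg _) hx
    nlinarith

lemma abs_energy_le (ξ : Config d) (σ : (x : Δ) → ℝ) :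
    |energy d Δ J σ ξ| ≤ KK Δ J ξ * (1 + SS Δ σ) ^ 2 := by
  unfold energy KK
  refine (Finset.abs_sum_le_sum_abs _ _).trans ?_
  rw [Finset.sum_mul, Finset.sum_mul]
  refine Finset.sum_le_sum fun e he => ?_
  have h1 : e.1 ∈ VV Δ :=
    Finset.mem_union_left _ (Finset.mem_image_of_mem _ he)
  have h2 : ept d e ∈ VV Δ :=
    Finset.mem_union_right _ (Finset.mem_image_of_mem _ he)
  have g1 := abs_glue_le Δ ξ σ h1
  have g2 := abs_glue_le Δ ξ σ h2
  have hB := BB_nonneg Δ ξ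
  have hS := SS_nonneg Δ σ
  have ha1 := abs_nonneg (glue d Δ σ ξ e.1)
  have ha2 := abs_nonneg (glue d Δ σ ξ (ept d e))
  have hJe := abs_nonneg (J e)
  rw [abs_mul, abs_mul]
  nlinarith [mul_le_mul g1 g2 ha2 (by nlinarith : (0:ℝ) ≤ (1 + BB Δ ξ) * (1 + SS Δ σ))]

end FellerAux
section FellerAux2

open Paper Real

variable {d : ℕ} (Δ : Finset (Site d)) (J : Edge d → ℝ) {p : ℝ}

lemma sq_le_one_add_rpow {t : ℝ} (ht : 0 ≤ t) (hp2 : 2 ≤ p) : t ^ 2 ≤ 1 + t ^ p := by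
  rcases le_or_gt t 1 with h | h
  · have h1 : t ^ 2 ≤ 1 := pow_le_one₀ ht h
    have h2 : 0 ≤ t ^ p := Real.rpow_nonneg ht p
    linarith
  · have h1 : t ^ (2 : ℝ) ≤ t ^ p := Real.rpow_le_rpow_of_exponent_le h.le hp2
    rw [Real.rpow_two] at h1
    linarith

def AA (C : ℝ) : ℝ := 2 * C * (1 + (Δ.card : ℝ) ^ 2)

def lam (C : ℝ) : ℝ := 2 * C * (Δ.card : ℝ) + 1

lemma lam_pos {C : ℝ} (hC : 0 ≤ C) : 0 < lam Δ C := by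
  unfold lam; positivity

lemma energy_le_bound (hp2 : 2 ≤ p) {C : ℝ} (hC : 0 ≤ C) {ξ : Config d}
    (hK : KK Δ J ξ ≤ C) (σ : (x : Δ) → ℝ) :
    energy d Δ J σ ξ ≤ AA Δ C + lam Δ C * ∑ x : Δ, |σ x| ^ p := by
  have h1 : energy d Δ J σ ξ ≤ KK Δ J ξ * (1 + SS Δ σ) ^ 2 :=
    (le_abs_self _).trans (abs_energy_le Δ J ξ σ)
  have hS := SS_nonneg Δ σ
  have h2 : KK Δ J ξ * (1 + SS Δ σ) ^ 2 ≤ C * (1 + SS Δ σ) ^ 2 :=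
    mul_le_mul_of_nonneg_right hK (sq_nonneg _)
  have h3 : (SS Δ σ) ^ 2 ≤ (Δ.card : ℝ) * ∑ x : Δ, |σ x| ^ 2 := by
    have := sq_sum_le_card_mul_sum_sq (s := (Finset.univ : Finset Δ))
      (f := fun x => |σ x|)
    simpa [SS, Finset.card_univ] using this
  have h4 : ∑ x : Δ, |σ x| ^ 2 ≤ (Δ.card : ℝ) + ∑ x : Δ, |σ x| ^ p := by
    calc ∑ x : Δ, |σ x| ^ 2 ≤ ∑ x : Δ, (1 + |σ x| ^ p) :=
          Finset.sum_le_sum fun x _ => sq_le_one_add_rpow (abs_nonneg _) hp2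
      _ = (Δ.card : ℝ) + ∑ x : Δ, |σ x| ^ p := by
          rw [Finset.sum_add_distrib]
          simp [Finset.card_univ]
  have h5 : 0 ≤ ∑ x : Δ, |σ x| ^ p :=
    Finset.sum_nonneg fun x _ => Real.rpow_nonneg (abs_nonneg _) p
  have hn : (0:ℝ) ≤ (Δ.card : ℝ) := Nat.cast_nonneg _
  unfold AA lam
  have e1 : C * (1 + SS Δ σ) ^ 2 ≤ C * (2 + 2 * (SS Δ σ) ^ 2) :=
    mul_le_mul_of_nonneg_left (by nlinarith [sq_nonneg (1 - SS Δ σ)]) hC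
  have e2 : 2 * C * (SS Δ σ) ^ 2 ≤ 2 * C * ((Δ.card : ℝ) * ∑ x : Δ, |σ x| ^ 2) :=
    mul_le_mul_of_nonneg_left h3 (by linarith)
  have e3 : (Δ.card : ℝ) * ∑ x : Δ, |σ x| ^ 2 ≤
      (Δ.card : ℝ) * ((Δ.card : ℝ) + ∑ x : Δ, |σ x| ^ p) :=
    mul_le_mul_of_nonneg_left h4 hn
  have e4 : 2 * C * ((Δ.card : ℝ) * ∑ x : Δ, |σ x| ^ 2) ≤
      2 * C * ((Δ.card : ℝ) * ((Δ.card : ℝ) + ∑ x : Δ, |σ x| ^ p)) :=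
    mul_le_mul_of_nonneg_left e3 (by linarith)
  nlinarith [e1, e2, e4]

def bigBound (C : ℝ) (p : ℝ) (σ : (x : Δ) → ℝ) : ℝ :=
  Real.exp (AA Δ C) * ∏ x : Δ, Real.exp (lam Δ C * |σ x| ^ p)

lemma bigBound_nonneg (C : ℝ) (σ : (x : Δ) → ℝ) : 0 ≤ bigBound Δ C p σ := by
  unfold bigBound; positivity

lemma exp_energy_le_bigBound (hp2 : 2 ≤ p) {C : ℝ} (hC : 0 ≤ C) {ξ : Config d}
    (hK : KK Δ J ξ ≤ C) (σ : (x : Δ) → ℝ) :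
    Real.exp (energy d Δ J σ ξ) ≤ bigBound Δ C p σ := by
  have := energy_le_bound Δ J hp2 hC hK σ
  unfold bigBound
  rw [← Real.exp_sum, ← Real.exp_add]
  exact Real.exp_le_exp.2 (by rwa [← Finset.mul_sum])

end FellerAux2
section FellerAux3

open Paper Real

variable {d : ℕ} (Δ : Finset (Site d)) (J : Edge d → ℝ) {p : ℝ}
variable (χ : Site d → Measure ℝ) [∀ x, IsProbabilityMeasure (χ x)]

lemma integrable_exp_rpow (x : Site d) {l : ℝ} (hl : 0 < l) (hp0 : 0 < p)
    (hCp : Cplus d χ p l < ⊤) :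
    Integrable (fun u : ℝ => Real.exp (l * |u| ^ p)) (χ x) := by
  have hcont : Continuous fun u : ℝ => Real.exp (l * |u| ^ p) :=
    Real.continuous_exp.comp
      (continuous_const.mul (continuous_abs.rpow_const fun u => Or.inr hp0.le))
  refine ⟨hcont.aestronglyMeasurable, ?_⟩
  rw [hasFiniteIntegral_iff_ofReal (ae_of_all _ fun u => (Real.exp_pos _).le)]
  refine lt_of_le_of_lt ?_ hCp
  exact le_iSup (fun x : Site d =>
    ∫⁻ u, ENNReal.ofReal (Real.exp (l * |u| ^ p)) ∂(χ x)) x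

lemma integrable_bigBound {C : ℝ} (hC : 0 ≤ C) (hp0 : 0 < p)
    (hCp : ∀ l : ℝ, 0 < l → Cplus d χ p l < ⊤) :
    Integrable (bigBound Δ C p) (refMeas d χ Δ) := by
  unfold bigBound
  refine Integrable.const_mul ?_ _
  have h := MeasureTheory.Integrable.fintype_prod_dep (ι := Δ) (E := fun _ => ℝ)
    (f := fun x u => Real.exp (lam Δ C * |u| ^ p)) (μ := fun x => χ x.1)
    (fun x => integrable_exp_rpow χ x.1 (lam_pos Δ hC) hp0 (hCp _ (lam_pos Δ hC)))
  exact h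

lemma integrable_exp_energy (hp2 : 2 ≤ p)
    (hCp : ∀ l : ℝ, 0 < l → Cplus d χ p l < ⊤) (ξ : Config d) :
    Integrable (fun σ : (x : Δ) → ℝ => Real.exp (energy d Δ J σ ξ)) (refMeas d χ Δ) := by
  have hp0 : 0 < p := lt_of_lt_of_le (by norm_num) hp2
  refine Integrable.mono'
    (integrable_bigBound Δ χ (le_max_right (KK Δ J ξ) 0) hp0 hCp)
    (Real.continuous_exp.comp (continuous_energy_sigma Δ J ξ)).aestronglyMeasurable
    (ae_of_all _ fun σ => ?_)
  rw [Real.norm_eq_abs, abs_of_pos (Real.exp_pos _)]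
  exact exp_energy_le_bigBound Δ J hp2 (le_max_right _ _) (le_max_left _ _) σ

/-- the partition function, as a real number -/
def Zr (ξ : Config d) : ℝ := ∫ σ, Real.exp (energy d Δ J σ ξ) ∂(refMeas d χ Δ)

lemma Zr_pos (hp2 : 2 ≤ p)
    (hCp : ∀ l : ℝ, 0 < l → Cplus d χ p l < ⊤) (ξ : Config d) :
    0 < Zr Δ J χ ξ := by
  have hint := integrable_exp_energy Δ J χ hp2 hCp ξ
  rw [Zr, integral_pos_iff_support_of_nonneg (fun σ => (Real.exp_pos _).le) hint]
  have : (Function.support fun σ : (x : Δ) → ℝ => Real.exp (energy d Δ J σ ξ))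
      = Set.univ := Set.eq_univ_of_forall fun σ => (Real.exp_pos _).ne'
  rw [this]
  have hprob : IsProbabilityMeasure (refMeas d χ Δ) := by
    unfold refMeas; infer_instance
  simp [hprob.ne_zero]

lemma Zpart_eq (hp2 : 2 ≤ p)
    (hCp : ∀ l : ℝ, 0 < l → Cplus d χ p l < ⊤) (ξ : Config d) :
    Zpart d χ Δ J ξ = ENNReal.ofReal (Zr Δ J χ ξ) :=
  (ofReal_integral_eq_lintegral_ofReal (integrable_exp_energy Δ J χ hp2 hCp ξ)
    (ae_of_all _ fun σ => (Real.exp_pos _).le)).symm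

/-- the numerator `∫ exp(-H) f(σ × ξ)` -/
def GG (ξ : Config d) (f : Config d → ℝ) : ℝ :=
  ∫ σ, Real.exp (energy d Δ J σ ξ) * f (glue d Δ σ ξ) ∂(refMeas d χ Δ)

lemma integral_gibbs (hp2 : 2 ≤ p)
    (hCp : ∀ l : ℝ, 0 < l → Cplus d χ p l < ⊤) (ξ : Config d)
    (f : BoundedContinuousFunction (Config d) ℝ) :
    ∫ σ, f σ ∂(gibbsKernel d χ Δ J ξ) = (Zr Δ J χ ξ)⁻¹ * GG Δ J χ ξ f := by
  have hZ := Zr_pos Δ J χ hp2 hCp ξ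
  unfold gibbsKernel
  rw [integral_smul_measure,
    integral_map (measurable_glue_sigma Δ ξ).aemeasurable
      f.continuous.aestronglyMeasurable]
  have hmeas : Measurable fun σ : (x : Δ) → ℝ =>
      (Real.exp (energy d Δ J σ ξ)).toNNReal :=
    (Real.continuous_exp.comp (continuous_energy_sigma Δ J ξ)).measurable.real_toNNReal
  rw [show (fun σ : (x : Δ) → ℝ => ENNReal.ofReal (Real.exp (energy d Δ J σ ξ)))
      = (fun σ : (x : Δ) → ℝ => ((Real.exp (energy d Δ J σ ξ)).toNNReal : ℝ≥0∞))
      from rfl,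
    integral_withDensity_eq_integral_smul hmeas]
  rw [Zpart_eq Δ J χ hp2 hCp ξ, ← ENNReal.ofReal_inv_of_pos hZ,
    ENNReal.toReal_ofReal (inv_nonneg.2 hZ.le)]
  rw [smul_eq_mul, GG]
  congr 1
  refine integral_congr_ae (ae_of_all _ fun σ => ?_)
  simp only [NNReal.smul_def, Real.coe_toNNReal _ (Real.exp_pos _).le, smul_eq_mul]

end FellerAux3

/-- Lemma 4.3 (Feller property): the kernels map bounded continuous functions to bounded
continuous functions. -/
theorem feller_property (d : ℕ) (hd : 0 < d)
    (w : Site d → ℝ) (hw_pos : ∀ x, 0 < w x) (hw_one : ∀ x, w x ≤ 1) (hw_sum : Summable w)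
    (w₀ : ℝ) (hw₀ : 0 < w₀) (hw_nb : ∀ x : Site d, ∀ y ∈ nbrs d x, w x ≤ w₀ * w y)
    (q p : ℝ) (hq : 1 < q) (hp : p = 2 * q / (q - 1))
    (χ : Site d → Measure ℝ) [∀ x, IsProbabilityMeasure (χ x)]
    (hCp : ∀ l : ℝ, 0 < l → Cplus d χ p l < ⊤)
    (hCm : ∀ l : ℝ, 0 < l → 0 < Cminus d χ p l) :
    ∀ (Δ : Finset (Site d)), ∀ J ∈ JqSet d w q, ∀ f : BoundedContinuousFunction (Config d) ℝ,
      Continuous (fun ξ : Config d => ∫ σ, f σ ∂(gibbsKernel d χ Δ J ξ)) ∧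
      ∃ M : ℝ, ∀ ξ : Config d, |∫ σ, f σ ∂(gibbsKernel d χ Δ J ξ)| ≤ M := by
  intro Δ J hJ f
  have hp2 : (2 : ℝ) ≤ p := by
    rw [hp, le_div_iff₀ (by linarith : (0:ℝ) < q - 1)]
    nlinarith
  have hp0 : (0 : ℝ) < p := lt_of_lt_of_le (by norm_num) hp2
  have key : ∀ ξ : Config d, ∫ σ, f σ ∂(gibbsKernel d χ Δ J ξ)
      = (Zr Δ J χ ξ)⁻¹ * GG Δ J χ ξ f := fun ξ => integral_gibbs Δ J χ hp2 hCp ξ f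
  constructor
  · -- continuity
    simp only [key]
    rw [continuous_iff_seqContinuous]
    intro u ξ hu
    obtain ⟨C0, hC0⟩ := (((continuous_KK Δ J).tendsto ξ).comp hu).bddAbove_range
    set C := max C0 0 with hCdef
    have hC : (0:ℝ) ≤ C := le_max_right _ _
    have hKle : ∀ n, KK Δ J (u n) ≤ C := fun n =>
      le_trans (hC0 ⟨n, rfl⟩) (le_max_left _ _)
    have hZ : Tendsto (fun n => Zr Δ J χ (u n)) atTop (𝓝 (Zr Δ J χ ξ)) := by
      unfold Zr
      apply tendsto_integral_of_dominated_convergence (bigBound Δ C p)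
      · exact fun n => (Real.continuous_exp.comp
          (continuous_energy_sigma Δ J (u n))).aestronglyMeasurable
      · exact integrable_bigBound Δ χ hC hp0 hCp
      · refine fun n => ae_of_all _ fun σ => ?_
        rw [Real.norm_eq_abs, abs_of_pos (Real.exp_pos _)]
        exact exp_energy_le_bigBound Δ J hp2 hC (hKle n) σ
      · exact ae_of_all _ fun σ =>
          ((Real.continuous_exp.comp (continuous_energy_xi Δ J σ)).tendsto ξ).comp hu
    have hG : Tendsto (fun n => GG Δ J χ (u n) f) atTop (𝓝 (GG Δ J χ ξ f)) := by
      unfold GG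
      apply tendsto_integral_of_dominated_convergence
        (fun σ => bigBound Δ C p σ * ‖f‖)
      · exact fun n => ((Real.continuous_exp.comp
          (continuous_energy_sigma Δ J (u n))).mul
          (f.continuous.comp (continuous_glue_sigma Δ (u n)))).aestronglyMeasurable
      · exact (integrable_bigBound Δ χ hC hp0 hCp).mul_const _
      · refine fun n => ae_of_all _ fun σ => ?_
        rw [norm_mul]
        refine mul_le_mul ?_ (f.norm_coe_le_norm _) (norm_nonneg _)
          (bigBound_nonneg Δ C σ)
        rw [Real.norm_eq_abs, abs_of_pos (Real.exp_pos _)]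
        exact exp_energy_le_bigBound Δ J hp2 hC (hKle n) σ
      · refine ae_of_all _ fun σ => ?_
        exact (((Real.continuous_exp.comp (continuous_energy_xi Δ J σ)).mul
          (f.continuous.comp (continuous_glue_xi Δ σ))).tendsto ξ).comp hu
    have := (hZ.inv₀ (Zr_pos Δ J χ hp2 hCp ξ).ne').mul hG
    simpa [Function.comp_def] using this
  · -- boundedness
    refine ⟨‖f‖, fun ξ => ?_⟩
    rw [key ξ]
    have hZ := Zr_pos Δ J χ hp2 hCp ξ
    have hint := integrable_exp_energy Δ J χ hp2 hCp ξ
    have hfi : Integrable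
        (fun σ : (x : Δ) → ℝ => Real.exp (energy d Δ J σ ξ) * f (glue d Δ σ ξ))
        (refMeas d χ Δ) := by
      refine Integrable.mono' (hint.mul_const ‖f‖)
        ((Real.continuous_exp.comp (continuous_energy_sigma Δ J ξ)).mul
          (f.continuous.comp (continuous_glue_sigma Δ ξ))).aestronglyMeasurable
        (ae_of_all _ fun σ => ?_)
      rw [norm_mul, Real.norm_eq_abs, abs_of_pos (Real.exp_pos _)]
      exact mul_le_mul_of_nonneg_left (f.norm_coe_le_norm _) (Real.exp_pos _).le
    have hGle : |GG Δ J χ ξ f| ≤ Zr Δ J χ ξ * ‖f‖ := by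
      have h0 : ‖∫ σ, Real.exp (energy d Δ J σ ξ) * f (glue d Δ σ ξ) ∂(refMeas d χ Δ)‖
          ≤ ∫ σ, ‖Real.exp (energy d Δ J σ ξ) * f (glue d Δ σ ξ)‖ ∂(refMeas d χ Δ) :=
        norm_integral_le_integral_norm _
      have h1 : ∫ σ, ‖Real.exp (energy d Δ J σ ξ) * f (glue d Δ σ ξ)‖ ∂(refMeas d χ Δ)
          ≤ ∫ σ, Real.exp (energy d Δ J σ ξ) * ‖f‖ ∂(refMeas d χ Δ) := by
        refine integral_mono hfi.norm (hint.mul_const _) fun σ => ?_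
        rw [norm_mul, Real.norm_eq_abs, abs_of_pos (Real.exp_pos _)]
        exact mul_le_mul_of_nonneg_left (f.norm_coe_le_norm _) (Real.exp_pos _).le
      calc |GG Δ J χ ξ f|
          = ‖∫ σ, Real.exp (energy d Δ J σ ξ) * f (glue d Δ σ ξ) ∂(refMeas d χ Δ)‖ := by
            rw [Real.norm_eq_abs]; rfl
        _ ≤ ∫ σ, Real.exp (energy d Δ J σ ξ) * ‖f‖ ∂(refMeas d χ Δ) := h0.trans h1
        _ = Zr Δ J χ ξ * ‖f‖ := integral_mul_const _ _
    rw [abs_mul, abs_inv, abs_of_pos hZ]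
    calc (Zr Δ J χ ξ)⁻¹ * |GG Δ J χ ξ f| ≤ (Zr Δ J χ ξ)⁻¹ * (Zr Δ J χ ξ * ‖f‖) :=
          mul_le_mul_of_nonneg_left hGle (inv_nonneg.2 hZ.le)
      _ = ‖f‖ := by rw [← mul_assoc, inv_mul_cancel₀ hZ.ne', one_mul]
end
end

section
/- (Lipschitz continuity in J) For every finite Δ ⊂ ℤ^d and every R > 0 there exist positive constants Θ₁(Δ, R), Θ₂(Δ, R) such that for all J, J′ ∈ 𝒥_q with ‖J‖_q ≤ R and ‖J′‖_q ≤ R, every bounded continuous f : ℝ^{ℤ^d} → ℝ, and every ξ ∈ 𝒮_p, one has |∫ f(σ) π_Δ(dσ|J,ξ) − ∫ f(σ) π_Δ(dσ|J′,ξ)| ≤ ‖J − J′‖_q · ‖f‖_∞ · (Θ₁(Δ, R) + Θ₂(Δ, R)‖ξ‖_p^p). -/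
open MeasureTheory ENNReal Filter Topology

noncomputable section

open Paper

namespace LipAux

open MeasureTheory Real
open scoped NNReal ENNReal

variable {d : ℕ}

lemma meas_glue (Δ : Finset (Site d)) (ξ : Config d) :
    Measurable (fun σ : (x : Δ) → ℝ => glue d Δ σ ξ) := by
  apply measurable_pi_lambda
  intro y
  by_cases h : y ∈ Δ
  · simpa [glue, h] using measurable_pi_apply (⟨y, h⟩ : Δ)
  · simp [glue, h]

lemma meas_gluecoord (Δ : Finset (Site d)) (ξ : Config d) (y : Site d) :
    Measurable (fun σ : (x : Δ) → ℝ => glue d Δ σ ξ y) :=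
  (measurable_pi_apply y).comp (meas_glue Δ ξ)

lemma meas_energy (Δ : Finset (Site d)) (K : Edge d → ℝ) (ξ : Config d) :
    Measurable (fun σ : (x : Δ) → ℝ => energy d Δ K σ ξ) := by
  unfold Paper.energy
  apply Finset.measurable_sum
  intro e _
  exact (measurable_const.mul (meas_gluecoord Δ ξ e.1)).mul (meas_gluecoord Δ ξ (ept d e))

lemma meas_rp (p : ℝ) (hp : 0 ≤ p) : Measurable (fun t : ℝ => |t| ^ p) :=
  ((continuous_abs).rpow_const (fun _ => Or.inr hp)).measurable

lemma meas_P (Δ : Finset (Site d)) (p : ℝ) (hp : 0 ≤ p) :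
    Measurable (fun σ : (x : Δ) → ℝ => ∑ x : Δ, |σ x| ^ p) := by
  apply Finset.measurable_sum
  intro x _
  exact (meas_rp p hp).comp (measurable_pi_apply x)

lemma prod_integrable {ι : Type*} [Fintype ι] (m : ι → Measure ℝ)
    [hm : ∀ i, IsProbabilityMeasure (m i)] (f : ι → ℝ → ℝ) (hf : ∀ i, Integrable (f i) (m i)) :
    Integrable (fun x : ι → ℝ => ∏ i, f i (x i)) (Measure.pi m) := by
  exact MeasureTheory.Integrable.fintype_prod_dep (f := f) (μ := m) (fun i => hf i)

lemma prod_integral {ι : Type*} [Fintype ι] (m : ι → Measure ℝ)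
    [hm : ∀ i, IsProbabilityMeasure (m i)] (f : ι → ℝ → ℝ) :
    ∫ x : ι → ℝ, (∏ i, f i (x i)) ∂(Measure.pi m) = ∏ i, ∫ u, f i u ∂(m i) := by
  exact MeasureTheory.integral_fintype_prod_eq_prod (f := f) (μ := m)

lemma integrable_of_lint {ν : Measure ℝ} {h : ℝ → ℝ} (hm : Measurable h) (h0 : ∀ u, 0 ≤ h u)
    (hfin : ∫⁻ u, ENNReal.ofReal (h u) ∂ν < ⊤) : Integrable h ν := by
  refine ⟨hm.aestronglyMeasurable, ?_⟩
  rw [hasFiniteIntegral_iff_ofReal (Filter.Eventually.of_forall h0)]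
  exact hfin

lemma integral_le_toReal {ν : Measure ℝ} {h : ℝ → ℝ} (hm : Measurable h) (h0 : ∀ u, 0 ≤ h u)
    {C : ℝ≥0∞} (hC : C ≠ ⊤) (hle : ∫⁻ u, ENNReal.ofReal (h u) ∂ν ≤ C) :
    ∫ u, h u ∂ν ≤ C.toReal := by
  rw [integral_eq_lintegral_of_nonneg_ae (Filter.Eventually.of_forall h0) hm.aestronglyMeasurable]
  exact ENNReal.toReal_mono hC hle

lemma toReal_le_integral {ν : Measure ℝ} {h : ℝ → ℝ} (hm : Measurable h) (h0 : ∀ u, 0 ≤ h u)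
    (hfin : ∫⁻ u, ENNReal.ofReal (h u) ∂ν ≠ ⊤)
    {C : ℝ≥0∞} (hle : C ≤ ∫⁻ u, ENNReal.ofReal (h u) ∂ν) :
    C.toReal ≤ ∫ u, h u ∂ν := by
  rw [integral_eq_lintegral_of_nonneg_ae (Filter.Eventually.of_forall h0) hm.aestronglyMeasurable]
  exact ENNReal.toReal_mono hfin hle

section Site

variable (χ : Site d → Measure ℝ) [∀ x, IsProbabilityMeasure (χ x)] (p : ℝ)

/-- upper bound for a site integral of `exp (l * |u| ^ p)`, `l > 0`. -/
lemma site_plus (hp0 : 0 ≤ p) (l : ℝ) (hl : 0 < l) (hCp : Cplus d χ p l < ⊤) (x : Site d) :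
    Integrable (fun u => Real.exp (l * |u| ^ p)) (χ x) ∧
      ∫ u, Real.exp (l * |u| ^ p) ∂(χ x) ≤ (Cplus d χ p l).toReal := by
  have hm : Measurable fun u : ℝ => Real.exp (l * |u| ^ p) :=
    ((meas_rp p hp0).const_mul l).exp
  have h0 : ∀ u : ℝ, 0 ≤ Real.exp (l * |u| ^ p) := fun u => (Real.exp_pos _).le
  have hle : ∫⁻ u, ENNReal.ofReal (Real.exp (l * |u| ^ p)) ∂(χ x) ≤ Cplus d χ p l :=
    le_iSup (fun x : Site d => ∫⁻ u, ENNReal.ofReal (Real.exp (l * |u| ^ p)) ∂(χ x)) x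
  exact ⟨integrable_of_lint hm h0 (lt_of_le_of_lt hle hCp),
    integral_le_toReal hm h0 hCp.ne hle⟩

/-- lower bound for a site integral of `exp (-(l * |u| ^ p))`, `l > 0`. -/
lemma site_minus (hp0 : 0 ≤ p) (l : ℝ) (hl : 0 < l) (x : Site d) :
    Integrable (fun u => Real.exp (-(l * |u| ^ p))) (χ x) ∧
      (Cminus d χ p l).toReal ≤ ∫ u, Real.exp (-(l * |u| ^ p)) ∂(χ x) := by
  have hm : Measurable fun u : ℝ => Real.exp (-(l * |u| ^ p)) :=
    (((meas_rp p hp0).const_mul l).neg).exp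
  have h0 : ∀ u : ℝ, 0 ≤ Real.exp (-(l * |u| ^ p)) := fun u => (Real.exp_pos _).le
  have hb : ∀ u : ℝ, Real.exp (-(l * |u| ^ p)) ≤ 1 := by
    intro u
    rw [Real.exp_le_one_iff]
    exact neg_nonpos.2 (mul_nonneg hl.le (Real.rpow_nonneg (abs_nonneg _) _))
  have hfin : ∫⁻ u, ENNReal.ofReal (Real.exp (-(l * |u| ^ p))) ∂(χ x) ≤ 1 := by
    calc ∫⁻ u, ENNReal.ofReal (Real.exp (-(l * |u| ^ p))) ∂(χ x)
        ≤ ∫⁻ _, 1 ∂(χ x) := lintegral_mono fun u => by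
          simpa using ENNReal.ofReal_le_ofReal (hb u)
      _ = 1 := by simp
  refine ⟨integrable_of_lint hm h0 (lt_of_le_of_lt hfin ENNReal.one_lt_top), ?_⟩
  exact toReal_le_integral hm h0 (by exact (lt_of_le_of_lt hfin ENNReal.one_lt_top).ne)
    (iInf_le (fun x : Site d => ∫⁻ u, ENNReal.ofReal (Real.exp (-(l * |u| ^ p))) ∂(χ x)) x)

end Site


lemma sq_le_one_add_rp {p : ℝ} (hp2 : 2 ≤ p) {t : ℝ} (ht : 0 ≤ t) : t ^ 2 ≤ 1 + t ^ p := by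
  rcases le_total t 1 with h | h
  · have : t ^ 2 ≤ 1 := pow_le_one₀ ht h
    have h2 : 0 ≤ t ^ p := Real.rpow_nonneg ht _
    linarith
  · have : (t : ℝ) ^ (2 : ℝ) ≤ t ^ p := Real.rpow_le_rpow_of_exponent_le h hp2
    rw [← Real.rpow_natCast t 2]
    push_cast
    linarith

lemma mul_le_one_add {p : ℝ} (hp2 : 2 ≤ p) (a b S : ℝ) (ha : |a| ^ p ≤ S) (hb : |b| ^ p ≤ S) :
    |a * b| ≤ 1 + S := by
  have h1 := sq_le_one_add_rp hp2 (abs_nonneg a)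
  have h2 := sq_le_one_add_rp hp2 (abs_nonneg b)
  have h3 : 2 * |a| * |b| ≤ |a| ^ 2 + |b| ^ 2 := two_mul_le_add_sq _ _
  rw [abs_mul]
  nlinarith [abs_nonneg a, abs_nonneg b]

lemma abs_exp_sub_exp (a b : ℝ) : |Real.exp a - Real.exp b| ≤ |a - b| * (Real.exp a + Real.exp b) := by
  have key : ∀ u v : ℝ, v ≤ u → Real.exp u - Real.exp v ≤ (u - v) * (Real.exp u + Real.exp v) := by
    intro u v huv
    have h1 : v - u + 1 ≤ Real.exp (v - u) := Real.add_one_le_exp _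
    have h2 : Real.exp v = Real.exp (v - u) * Real.exp u := by
      rw [← Real.exp_add]; ring_nf
    have h3 : Real.exp u * (v - u + 1) ≤ Real.exp v := by
      rw [h2]
      have := mul_le_mul_of_nonneg_left h1 (Real.exp_pos u).le
      linarith [this]
    nlinarith [Real.exp_pos u, Real.exp_pos v, sub_nonneg.2 huv]
  rcases le_total b a with h | h
  · rw [abs_of_nonneg (sub_nonneg.2 (Real.exp_le_exp.2 h)), abs_of_nonneg (sub_nonneg.2 h)]
    exact key a b h
  · rw [abs_of_nonpos (sub_nonpos.2 (Real.exp_le_exp.2 h)), abs_of_nonpos (sub_nonpos.2 h)]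
    have := key b a h
    nlinarith


/-- the finite set of sites relevant for `Δ`. -/
def TT (d : ℕ) (Δ : Finset (Site d)) : Finset (Site d) :=
  (Δ ∪ (edgesIn d Δ).image Prod.fst) ∪ (edgesIn d Δ).image (ept d)

lemma glue_rp_le {p : ℝ} (hp0 : 0 ≤ p) (Δ : Finset (Site d)) (ξ : Config d)
    (σ : (x : Δ) → ℝ) {y : Site d} (hy : y ∈ TT d Δ) :
    |glue d Δ σ ξ y| ^ p ≤ (∑ x : Δ, |σ x| ^ p) + ∑ x ∈ TT d Δ, |ξ x| ^ p := by
  have hPn : (0:ℝ) ≤ ∑ x : Δ, |σ x| ^ p :=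
    Finset.sum_nonneg fun _ _ => Real.rpow_nonneg (abs_nonneg _) _
  have hQn : (0:ℝ) ≤ ∑ x ∈ TT d Δ, |ξ x| ^ p :=
    Finset.sum_nonneg fun _ _ => Real.rpow_nonneg (abs_nonneg _) _
  by_cases h : y ∈ Δ
  · have : |glue d Δ σ ξ y| ^ p = |σ ⟨y, h⟩| ^ p := by simp [glue, h]
    rw [this]
    have h1 : |σ ⟨y, h⟩| ^ p ≤ ∑ x : Δ, |σ x| ^ p :=
      Finset.single_le_sum (fun x _ => Real.rpow_nonneg (abs_nonneg _) _)
        (Finset.mem_univ (⟨y, h⟩ : Δ))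
    linarith
  · have : |glue d Δ σ ξ y| ^ p = |ξ y| ^ p := by simp [glue, h]
    rw [this]
    have h1 : |ξ y| ^ p ≤ ∑ x ∈ TT d Δ, |ξ x| ^ p :=
      Finset.single_le_sum (fun x _ => Real.rpow_nonneg (abs_nonneg _) _) hy
    linarith

lemma ends_mem_TT {Δ : Finset (Site d)} {e : Edge d} (he : e ∈ edgesIn d Δ) :
    e.1 ∈ TT d Δ ∧ ept d e ∈ TT d Δ := by
  constructor
  · exact Finset.mem_union_left _ (Finset.mem_union_right _ (Finset.mem_image_of_mem _ he))
  · exact Finset.mem_union_right _ (Finset.mem_image_of_mem _ he)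

/-- the fundamental pointwise bound on the energy. -/
lemma energy_bound {p : ℝ} (hp2 : 2 ≤ p) (Δ : Finset (Site d)) (ξ : Config d)
    (K θ : Edge d → ℝ) (hθ : ∀ e ∈ edgesIn d Δ, |K e| ≤ θ e) (σ : (x : Δ) → ℝ) :
    |energy d Δ K σ ξ| ≤ (∑ e ∈ edgesIn d Δ, θ e) *
      (1 + (∑ x : Δ, |σ x| ^ p) + ∑ x ∈ TT d Δ, |ξ x| ^ p) := by
  have hp0 : (0:ℝ) ≤ p := by linarith
  set P := ∑ x : Δ, |σ x| ^ p with hP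
  set Q := ∑ x ∈ TT d Δ, |ξ x| ^ p with hQ
  have key : ∀ e ∈ edgesIn d Δ, |K e * glue d Δ σ ξ e.1 * glue d Δ σ ξ (ept d e)|
      ≤ θ e * (1 + P + Q) := by
    intro e he
    obtain ⟨h1, h2⟩ := ends_mem_TT he
    have hg : |glue d Δ σ ξ e.1 * glue d Δ σ ξ (ept d e)| ≤ 1 + (P + Q) :=
      mul_le_one_add hp2 _ _ _ (glue_rp_le hp0 Δ ξ σ h1) (glue_rp_le hp0 Δ ξ σ h2)
    have h0 : (0:ℝ) ≤ |glue d Δ σ ξ e.1 * glue d Δ σ ξ (ept d e)| := abs_nonneg _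
    calc |K e * glue d Δ σ ξ e.1 * glue d Δ σ ξ (ept d e)|
        = |K e| * |glue d Δ σ ξ e.1 * glue d Δ σ ξ (ept d e)| := by
          rw [mul_assoc, abs_mul]
      _ ≤ θ e * (1 + P + Q) := by
          have := mul_le_mul (hθ e he) hg h0 ((abs_nonneg (K e)).trans (hθ e he))
          calc |K e| * |glue d Δ σ ξ e.1 * glue d Δ σ ξ (ept d e)| ≤ θ e * (1 + (P + Q)) := this
            _ = θ e * (1 + P + Q) := by ring
  calc |energy d Δ K σ ξ| ≤ ∑ e ∈ edgesIn d Δ, |K e * glue d Δ σ ξ e.1 * glue d Δ σ ξ (ept d e)| :=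
        Finset.abs_sum_le_sum_abs _ _
    _ ≤ ∑ e ∈ edgesIn d Δ, θ e * (1 + P + Q) := Finset.sum_le_sum key
    _ = (∑ e ∈ edgesIn d Δ, θ e) * (1 + P + Q) := by rw [Finset.sum_mul]


section Main

variable (χ : Site d → Measure ℝ) [∀ x, IsProbabilityMeasure (χ x)]

lemma mainK (p : ℝ) (hp2 : 2 ≤ p)
    (hCp : ∀ l : ℝ, 0 < l → Cplus d χ p l < ⊤)
    (hCm : ∀ l : ℝ, 0 < l → 0 < Cminus d χ p l)
    (Δ : Finset (Site d)) (ξ : Config d) (lam Q : ℝ) (hlam : 1 ≤ lam) (hQ : 0 ≤ Q)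
    (K : Edge d → ℝ)
    (hE : ∀ σ : (x : Δ) → ℝ,
      |energy d Δ K σ ξ| ≤ lam * (1 + (∑ x : Δ, |σ x| ^ p) + Q)) :
    Integrable (fun σ => Real.exp (energy d Δ K σ ξ)) (refMeas d χ Δ) ∧
    Real.exp (-(lam * (1 + Q))) * ((Cminus d χ p lam).toReal) ^ Δ.card
      ≤ ∫ σ, Real.exp (energy d Δ K σ ξ) ∂(refMeas d χ Δ) ∧
    Zpart d χ Δ K ξ
      = ENNReal.ofReal (∫ σ, Real.exp (energy d Δ K σ ξ) ∂(refMeas d χ Δ)) ∧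
    Integrable (fun σ => (∑ x : Δ, |σ x| ^ p) * Real.exp (energy d Δ K σ ξ)) (refMeas d χ Δ) ∧
    ∫ σ, (∑ x : Δ, |σ x| ^ p) * Real.exp (energy d Δ K σ ξ) ∂(refMeas d χ Δ)
      ≤ (2 * lam * (1 + Q) + Δ.card * (Real.log (max 1 (Cplus d χ p (lam + 1)).toReal)
          + |Real.log (Cminus d χ p lam).toReal|))
        * ∫ σ, Real.exp (energy d Δ K σ ξ) ∂(refMeas d χ Δ) := by
  have hp0 : (0:ℝ) ≤ p := by linarith
  have hlam0 : (0:ℝ) < lam := by linarith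
  set μ0 := refMeas d χ Δ with hμ0
  set P : ((x : Δ) → ℝ) → ℝ := fun σ => ∑ x : Δ, |σ x| ^ p with hPdef
  set ρ : ((x : Δ) → ℝ) → ℝ := fun σ => Real.exp (energy d Δ K σ ξ) with hρdef
  have hPmeas : Measurable P := meas_P Δ p hp0
  have hPn : ∀ σ, 0 ≤ P σ := fun σ =>
    Finset.sum_nonneg fun _ _ => Real.rpow_nonneg (abs_nonneg _) _
  have hρmeas : Measurable ρ := (meas_energy Δ K ξ).exp
  have hρpos : ∀ σ, 0 < ρ σ := fun σ => Real.exp_pos _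
  -- product dominators
  have hprod : ∀ r : ℝ, (∀ x : Δ, Integrable (fun u => Real.exp (r * |u| ^ p)) (χ x.1)) →
      Integrable (fun σ : (x : Δ) → ℝ => Real.exp (r * P σ)) μ0 ∧
      ∫ σ, Real.exp (r * P σ) ∂μ0 = ∏ x : Δ, ∫ u, Real.exp (r * |u| ^ p) ∂(χ x.1) := by
    intro r hint
    have hfun : (fun σ : (x : Δ) → ℝ => Real.exp (r * P σ))
        = fun σ : (x : Δ) → ℝ => ∏ x : Δ, Real.exp (r * |σ x| ^ p) := by
      funext σ
      rw [hPdef, Finset.mul_sum, Real.exp_sum]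
    constructor
    · rw [hfun]
      exact prod_integrable (fun x : Δ => χ x.1) _ hint
    · rw [hfun]
      exact prod_integral (fun x : Δ => χ x.1) (fun x u => Real.exp (r * |u| ^ p))
  have hsite_p : ∀ x : Δ, Integrable (fun u => Real.exp ((lam + 1) * |u| ^ p)) (χ x.1) ∧
      ∫ u, Real.exp ((lam + 1) * |u| ^ p) ∂(χ x.1) ≤ (Cplus d χ p (lam + 1)).toReal :=
    fun x => site_plus χ p hp0 (lam + 1) (by linarith) (hCp _ (by linarith)) x.1
  have hsite_lam : ∀ x : Δ, Integrable (fun u => Real.exp (lam * |u| ^ p)) (χ x.1) ∧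
      ∫ u, Real.exp (lam * |u| ^ p) ∂(χ x.1) ≤ (Cplus d χ p lam).toReal :=
    fun x => site_plus χ p hp0 lam hlam0 (hCp _ hlam0) x.1
  have hsite_m : ∀ x : Δ, Integrable (fun u => Real.exp (-lam * |u| ^ p)) (χ x.1) ∧
      (Cminus d χ p lam).toReal ≤ ∫ u, Real.exp (-lam * |u| ^ p) ∂(χ x.1) := by
    intro x
    have := site_minus χ p hp0 lam hlam0 x.1
    simpa [neg_mul] using this
  have hdomp : Integrable (fun σ : (x : Δ) → ℝ => Real.exp ((lam + 1) * P σ)) μ0 ∧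
      ∫ σ, Real.exp ((lam + 1) * P σ) ∂μ0
        = ∏ x : Δ, ∫ u, Real.exp ((lam + 1) * |u| ^ p) ∂(χ x.1) :=
    hprod (lam + 1) fun x => (hsite_p x).1
  have hdoml : Integrable (fun σ : (x : Δ) → ℝ => Real.exp (lam * P σ)) μ0 :=
    (hprod lam fun x => (hsite_lam x).1).1
  have hdomm : Integrable (fun σ : (x : Δ) → ℝ => Real.exp (-lam * P σ)) μ0 ∧
      ∫ σ, Real.exp (-lam * P σ) ∂μ0
        = ∏ x : Δ, ∫ u, Real.exp (-lam * |u| ^ p) ∂(χ x.1) :=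
    hprod (-lam) fun x => (hsite_m x).1
  -- (1) integrability of ρ
  have h1 : Integrable ρ μ0 := by
    apply Integrable.mono' (hdoml.const_mul (Real.exp (lam * (1 + Q))))
      hρmeas.aestronglyMeasurable
    filter_upwards with σ
    have h := (abs_le.1 (hE σ)).2
    have : ρ σ ≤ Real.exp (lam * (1 + Q)) * Real.exp (lam * P σ) := by
      rw [hρdef, ← Real.exp_add]
      apply Real.exp_le_exp.2
      nlinarith
    simpa [abs_of_pos (hρpos σ)] using this
  set z := ∫ σ, ρ σ ∂μ0 with hzdef
  -- (2) lower bound for z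
  set cm := (Cminus d χ p lam).toReal with hcm
  have hcm0 : 0 ≤ cm := ENNReal.toReal_nonneg
  have hcmne : Cminus d χ p lam ≠ ⊤ := by
    have hle : Cminus d χ p lam
        ≤ ∫⁻ u, ENNReal.ofReal (Real.exp (-(lam * |u| ^ p))) ∂(χ (0 : Site d)) :=
      iInf_le _ _
    have hb : ∫⁻ u, ENNReal.ofReal (Real.exp (-(lam * |u| ^ p))) ∂(χ (0 : Site d)) ≤ 1 := by
      calc ∫⁻ u, ENNReal.ofReal (Real.exp (-(lam * |u| ^ p))) ∂(χ (0 : Site d))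
          ≤ ∫⁻ _, 1 ∂(χ (0 : Site d)) := lintegral_mono fun u => by
            have : Real.exp (-(lam * |u| ^ p)) ≤ 1 := by
              rw [Real.exp_le_one_iff]
              exact neg_nonpos.2 (mul_nonneg hlam0.le (Real.rpow_nonneg (abs_nonneg _) _))
            simpa using ENNReal.ofReal_le_ofReal this
        _ = 1 := by simp
    exact (lt_of_le_of_lt (hle.trans hb) ENNReal.one_lt_top).ne
  have hcmpos : 0 < cm := ENNReal.toReal_pos (hCm lam hlam0).ne' hcmne
  have h2 : Real.exp (-(lam * (1 + Q))) * cm ^ Δ.card ≤ z := by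
    have hlow : ∀ σ : (x : Δ) → ℝ,
        Real.exp (-(lam * (1 + Q))) * Real.exp (-lam * P σ) ≤ ρ σ := by
      intro σ
      rw [hρdef, ← Real.exp_add]
      apply Real.exp_le_exp.2
      have h := (abs_le.1 (hE σ)).1
      nlinarith
    have hint : Integrable (fun σ : (x : Δ) → ℝ =>
        Real.exp (-(lam * (1 + Q))) * Real.exp (-lam * P σ)) μ0 :=
      hdomm.1.const_mul _
    have hmono := integral_mono hint h1 hlow
    have heq : ∫ σ, Real.exp (-(lam * (1 + Q))) * Real.exp (-lam * P σ) ∂μ0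
        = Real.exp (-(lam * (1 + Q))) * ∏ x : Δ, ∫ u, Real.exp (-lam * |u| ^ p) ∂(χ x.1) := by
      rw [integral_const_mul, hdomm.2]
    have hprodge : cm ^ Δ.card ≤ ∏ x : Δ, ∫ u, Real.exp (-lam * |u| ^ p) ∂(χ x.1) := by
      have := Finset.prod_le_prod (s := (Finset.univ : Finset Δ))
        (f := fun _ => cm) (g := fun x : Δ => ∫ u, Real.exp (-lam * |u| ^ p) ∂(χ x.1))
        (fun _ _ => hcm0) (fun x _ => (hsite_m x).2)
      simpa [Finset.prod_const, Finset.card_univ] using this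
    calc Real.exp (-(lam * (1 + Q))) * cm ^ Δ.card
        ≤ Real.exp (-(lam * (1 + Q)))
          * ∏ x : Δ, ∫ u, Real.exp (-lam * |u| ^ p) ∂(χ x.1) :=
          mul_le_mul_of_nonneg_left hprodge (Real.exp_pos _).le
      _ = ∫ σ, Real.exp (-(lam * (1 + Q))) * Real.exp (-lam * P σ) ∂μ0 := heq.symm
      _ ≤ z := hmono
  -- (3) Zpart = ofReal z
  have h3 : Zpart d χ Δ K ξ = ENNReal.ofReal z := by
    rw [hzdef]
    exact (ofReal_integral_eq_lintegral_ofReal h1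
      (Filter.Eventually.of_forall fun σ => (hρpos σ).le)).symm
  -- (4) integrability of P * ρ
  have hPpt : ∀ σ, P σ * ρ σ ≤ Real.exp (lam * (1 + Q)) * Real.exp ((lam + 1) * P σ) := by
    intro σ
    have hP := hPn σ
    have h := (abs_le.1 (hE σ)).2
    have h1' : ρ σ ≤ Real.exp (lam * (1 + Q) + lam * P σ) := by
      rw [hρdef]
      apply Real.exp_le_exp.2
      nlinarith
    have h2' : P σ ≤ Real.exp (P σ) := by
      have := Real.add_one_le_exp (P σ)
      linarith
    calc P σ * ρ σ ≤ Real.exp (P σ) * Real.exp (lam * (1 + Q) + lam * P σ) :=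
          mul_le_mul h2' h1' (hρpos σ).le (Real.exp_pos _).le
      _ = Real.exp (lam * (1 + Q)) * Real.exp ((lam + 1) * P σ) := by
          rw [← Real.exp_add, ← Real.exp_add]
          ring_nf
  have h4 : Integrable (fun σ => P σ * ρ σ) μ0 := by
    apply Integrable.mono' (hdomp.1.const_mul (Real.exp (lam * (1 + Q))))
      (hPmeas.mul hρmeas).aestronglyMeasurable
    filter_upwards with σ
    have hb := hPpt σ
    have h0 : 0 ≤ P σ * ρ σ := mul_nonneg (hPn σ) (hρpos σ).le
    rw [Pi.mul_apply, Real.norm_eq_abs, abs_of_nonneg h0]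
    exact hb
  -- (5) the moment estimate
  have hz0 : 0 < z :=
    lt_of_lt_of_le (mul_pos (Real.exp_pos _) (pow_pos hcmpos Δ.card)) h2
  set I := ∫ σ, P σ * ρ σ ∂μ0 with hIdef
  have hI0 : 0 ≤ I := integral_nonneg fun σ => mul_nonneg (hPn σ) (hρpos σ).le
  set mb := I / z with hmb
  have hmbz : mb * z = I := div_mul_cancel₀ I hz0.ne'
  -- integrability of exp(P) * ρ
  have hexpPρ : Integrable (fun σ => Real.exp (P σ) * ρ σ) μ0 := by
    apply Integrable.mono' (hdomp.1.const_mul (Real.exp (lam * (1 + Q))))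
      (hPmeas.exp.mul hρmeas).aestronglyMeasurable
    filter_upwards with σ
    have h := (abs_le.1 (hE σ)).2
    have hb : Real.exp (P σ) * ρ σ ≤ Real.exp (lam * (1 + Q)) * Real.exp ((lam + 1) * P σ) := by
      rw [hρdef, ← Real.exp_add, ← Real.exp_add]
      apply Real.exp_le_exp.2
      nlinarith
    have h0 : 0 ≤ Real.exp (P σ) * ρ σ := mul_nonneg (Real.exp_pos _).le (hρpos σ).le
    rw [Pi.mul_apply, Real.norm_eq_abs, abs_of_nonneg h0]
    exact hb
  -- Jensen-type inequality : exp mb * z ≤ ∫ exp(P) ρ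
  have hjensen : Real.exp mb * z ≤ ∫ σ, Real.exp (P σ) * ρ σ ∂μ0 := by
    have hlhs : Integrable
        (fun σ => Real.exp mb * ((1 - mb) * ρ σ + P σ * ρ σ)) μ0 :=
      (((h1.const_mul (1 - mb)).add h4).const_mul _)
    have hpt : ∀ σ, Real.exp mb * ((1 - mb) * ρ σ + P σ * ρ σ)
        ≤ Real.exp (P σ) * ρ σ := by
      intro σ
      have h1' : (P σ - mb) + 1 ≤ Real.exp (P σ - mb) := Real.add_one_le_exp _
      have h2' : Real.exp mb * Real.exp (P σ - mb) = Real.exp (P σ) := by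
        rw [← Real.exp_add]; ring_nf
      have h3' : Real.exp mb * ((P σ - mb) + 1) ≤ Real.exp (P σ) := by
        rw [← h2']
        exact mul_le_mul_of_nonneg_left h1' (Real.exp_pos _).le
      have hρ0 := (hρpos σ).le
      nlinarith [hρpos σ]
    have := integral_mono hlhs hexpPρ hpt
    calc Real.exp mb * z = ∫ σ, Real.exp mb * ((1 - mb) * ρ σ + P σ * ρ σ) ∂μ0 := by
          rw [integral_const_mul, integral_add (h1.const_mul (1 - mb)) h4,
            integral_const_mul, ← hzdef, ← hIdef, ← hmbz]
          ring
      _ ≤ ∫ σ, Real.exp (P σ) * ρ σ ∂μ0 := this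
  -- upper bound for ∫ exp(P) ρ
  set cpm := max 1 (Cplus d χ p (lam + 1)).toReal with hcpm
  have hcpm1 : (1:ℝ) ≤ cpm := le_max_left _ _
  have hcpm0 : (0:ℝ) < cpm := lt_of_lt_of_le one_pos hcpm1
  have hupper : ∫ σ, Real.exp (P σ) * ρ σ ∂μ0
      ≤ Real.exp (lam * (1 + Q)) * cpm ^ Δ.card := by
    have hpt : ∀ σ, Real.exp (P σ) * ρ σ
        ≤ Real.exp (lam * (1 + Q)) * Real.exp ((lam + 1) * P σ) := by
      intro σ
      have h := (abs_le.1 (hE σ)).2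
      rw [hρdef, ← Real.exp_add, ← Real.exp_add]
      apply Real.exp_le_exp.2
      nlinarith
    have hmono := integral_mono hexpPρ (hdomp.1.const_mul _) hpt
    have heq : ∫ σ, Real.exp (lam * (1 + Q)) * Real.exp ((lam + 1) * P σ) ∂μ0
        = Real.exp (lam * (1 + Q))
          * ∏ x : Δ, ∫ u, Real.exp ((lam + 1) * |u| ^ p) ∂(χ x.1) := by
      rw [integral_const_mul, hdomp.2]
    have hprodle : ∏ x : Δ, ∫ u, Real.exp ((lam + 1) * |u| ^ p) ∂(χ x.1)
        ≤ cpm ^ Δ.card := by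
      have := Finset.prod_le_prod (s := (Finset.univ : Finset Δ))
        (f := fun x : Δ => ∫ u, Real.exp ((lam + 1) * |u| ^ p) ∂(χ x.1))
        (g := fun _ => cpm)
        (fun x _ => integral_nonneg fun u => (Real.exp_pos _).le)
        (fun x _ => le_trans (hsite_p x).2 (le_max_right _ _))
      simpa [Finset.prod_const, Finset.card_univ] using this
    calc ∫ σ, Real.exp (P σ) * ρ σ ∂μ0
        ≤ Real.exp (lam * (1 + Q))
          * ∏ x : Δ, ∫ u, Real.exp ((lam + 1) * |u| ^ p) ∂(χ x.1) := heq ▸ hmono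
      _ ≤ Real.exp (lam * (1 + Q)) * cpm ^ Δ.card :=
          mul_le_mul_of_nonneg_left hprodle (Real.exp_pos _).le
  -- combine
  have hB0 : (0:ℝ) < Real.exp (-(lam * (1 + Q))) * cm ^ Δ.card :=
    mul_pos (Real.exp_pos _) (pow_pos hcmpos _)
  have hexpmb : Real.exp mb ≤ (Real.exp (lam * (1 + Q)) * cpm ^ Δ.card)
      / (Real.exp (-(lam * (1 + Q))) * cm ^ Δ.card) := by
    rw [le_div_iff₀ hB0]
    calc Real.exp mb * (Real.exp (-(lam * (1 + Q))) * cm ^ Δ.card)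
        ≤ Real.exp mb * z := mul_le_mul_of_nonneg_left h2 (Real.exp_pos _).le
      _ ≤ ∫ σ, Real.exp (P σ) * ρ σ ∂μ0 := hjensen
      _ ≤ Real.exp (lam * (1 + Q)) * cpm ^ Δ.card := hupper
  have hmble : mb ≤ 2 * lam * (1 + Q) + Δ.card * (Real.log cpm + |Real.log cm|) := by
    have hlog : mb ≤ Real.log ((Real.exp (lam * (1 + Q)) * cpm ^ Δ.card)
        / (Real.exp (-(lam * (1 + Q))) * cm ^ Δ.card)) := by
      rw [← Real.log_exp mb]
      apply Real.log_le_log (Real.exp_pos _)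
      exact hexpmb
    have hAC : Real.log ((Real.exp (lam * (1 + Q)) * cpm ^ Δ.card)
        / (Real.exp (-(lam * (1 + Q))) * cm ^ Δ.card))
        = (lam * (1 + Q) + Δ.card * Real.log cpm)
          - (-(lam * (1 + Q)) + Δ.card * Real.log cm) := by
      rw [Real.log_div (mul_pos (Real.exp_pos _) (pow_pos hcpm0 _)).ne' hB0.ne',
        Real.log_mul (Real.exp_pos _).ne' (pow_pos hcpm0 _).ne',
        Real.log_mul (Real.exp_pos _).ne' (pow_pos hcmpos _).ne',
        Real.log_exp, Real.log_exp, Real.log_pow, Real.log_pow]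
    rw [hAC] at hlog
    have habs : -Real.log cm ≤ |Real.log cm| := neg_le_abs _
    have hn0 : (0:ℝ) ≤ (Δ.card : ℝ) := Nat.cast_nonneg _
    nlinarith
  -- conclude (5)
  have h5 : I ≤ (2 * lam * (1 + Q) + Δ.card * (Real.log cpm + |Real.log cm|)) * z := by
    rw [← hmbz]
    exact mul_le_mul_of_nonneg_right hmble hz0.le
  exact ⟨h1, h2, h3, h4, h5⟩

lemma gibbs_repr (Δ : Finset (Site d)) (K : Edge d → ℝ) (ξ : Config d)
    (hInt : Integrable (fun σ => Real.exp (energy d Δ K σ ξ)) (refMeas d χ Δ))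
    {z : ℝ} (hz : 0 < z)
    (hZ : Zpart d χ Δ K ξ = ENNReal.ofReal z)
    (f : BoundedContinuousFunction (Config d) ℝ) :
    ∫ σ, f σ ∂(gibbsKernel d χ Δ K ξ)
      = (∫ σ, f (glue d Δ σ ξ) * Real.exp (energy d Δ K σ ξ) ∂(refMeas d χ Δ)) / z ∧
    Integrable (fun σ => f (glue d Δ σ ξ) * Real.exp (energy d Δ K σ ξ)) (refMeas d χ Δ) := by
  have hglue : Measurable (fun σ : (x : Δ) → ℝ => glue d Δ σ ξ) := meas_glue Δ ξ
  have hFb : ∀ σ : (x : Δ) → ℝ, ‖f (glue d Δ σ ξ)‖ ≤ ‖f‖ :=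
    fun σ => f.norm_coe_le_norm _
  have hint2 : Integrable
      (fun σ => f (glue d Δ σ ξ) * Real.exp (energy d Δ K σ ξ)) (refMeas d χ Δ) :=
    hInt.bdd_mul ((f.continuous.measurable.comp hglue).aestronglyMeasurable)
      (c := ‖f‖) (Filter.Eventually.of_forall hFb)
  refine ⟨?_, hint2⟩
  unfold Paper.gibbsKernel
  rw [integral_smul_measure,
    integral_map hglue.aemeasurable f.continuous.measurable.aestronglyMeasurable]
  have hden : (fun σ : (x : Δ) → ℝ => ENNReal.ofReal (Real.exp (energy d Δ K σ ξ)))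
      = (fun σ : (x : Δ) → ℝ =>
          ((Real.toNNReal (Real.exp (energy d Δ K σ ξ)) : ℝ≥0) : ℝ≥0∞)) := rfl
  rw [hden, integral_withDensity_eq_integral_smul
    ((meas_energy Δ K ξ).exp.real_toNNReal)]
  have hsmul : ∀ σ : (x : Δ) → ℝ,
      Real.toNNReal (Real.exp (energy d Δ K σ ξ)) • f (glue d Δ σ ξ)
        = f (glue d Δ σ ξ) * Real.exp (energy d Δ K σ ξ) := by
    intro σ
    rw [NNReal.smul_def, smul_eq_mul, Real.coe_toNNReal _ (Real.exp_pos _).le, mul_comm]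
  rw [hZ]
  simp only [hsmul]
  rw [ENNReal.toReal_inv, ENNReal.toReal_ofReal hz.le, smul_eq_mul, div_eq_inv_mul]

lemma cminus_toReal_pos (p l : ℝ) (hl : 0 < l) (hCm : 0 < Cminus d χ p l) :
    0 < (Cminus d χ p l).toReal := by
  have hcmne : Cminus d χ p l ≠ ⊤ := by
    have hle : Cminus d χ p l
        ≤ ∫⁻ u, ENNReal.ofReal (Real.exp (-(l * |u| ^ p))) ∂(χ (0 : Site d)) :=
      iInf_le _ _
    have hb : ∫⁻ u, ENNReal.ofReal (Real.exp (-(l * |u| ^ p))) ∂(χ (0 : Site d)) ≤ 1 := by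
      calc ∫⁻ u, ENNReal.ofReal (Real.exp (-(l * |u| ^ p))) ∂(χ (0 : Site d))
          ≤ ∫⁻ _, 1 ∂(χ (0 : Site d)) := lintegral_mono fun u => by
            have : Real.exp (-(l * |u| ^ p)) ≤ 1 := by
              rw [Real.exp_le_one_iff]
              exact neg_nonpos.2 (mul_nonneg hl.le (Real.rpow_nonneg (abs_nonneg _) _))
            simpa using ENNReal.ofReal_le_ofReal this
        _ = 1 := by simp
    exact (lt_of_le_of_lt (hle.trans hb) ENNReal.one_lt_top).ne
  exact ENNReal.toReal_pos hCm.ne' hcmne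

end Main

section Norms

variable (w : Site d → ℝ) (q : ℝ)

lemma eWt_pos (hw : ∀ x, 0 < w x) (e : Edge d) : 0 < eWt d w e :=
  add_pos (hw _) (hw _)

lemma edge_bound (hw : ∀ x, 0 < w x) (hq0 : 0 < q) {K : Edge d → ℝ}
    (hsum : Summable fun e => |K e| ^ q * eWt d w e)
    {M : ℝ} (hM : JnormQ d w q K ≤ M) (e : Edge d) :
    |K e| ≤ (M / eWt d w e) ^ (1 / q) := by
  have hterm : |K e| ^ q * eWt d w e ≤ M := by
    refine le_trans ?_ hM
    exact hsum.le_tsum e fun j _ =>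
      mul_nonneg (Real.rpow_nonneg (abs_nonneg _) _) (eWt_pos w hw j).le
  have hKq : |K e| ^ q ≤ M / eWt d w e := (le_div_iff₀ (eWt_pos w hw e)).2 hterm
  have h1 : (|K e| ^ q) ^ (1 / q) ≤ (M / eWt d w e) ^ (1 / q) :=
    Real.rpow_le_rpow (Real.rpow_nonneg (abs_nonneg _) _) hKq (by positivity)
  calc |K e| = (|K e| ^ q) ^ (1 / q) := by
        rw [← Real.rpow_mul (abs_nonneg _), mul_one_div, div_self hq0.ne', Real.rpow_one]
    _ ≤ (M / eWt d w e) ^ (1 / q) := h1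

lemma sub_summable (hw : ∀ x, 0 < w x) (hq1 : 1 ≤ q) {J J' : Edge d → ℝ}
    (hJ : Summable fun e => |J e| ^ q * eWt d w e)
    (hJ' : Summable fun e => |J' e| ^ q * eWt d w e) :
    Summable fun e => |(J - J') e| ^ q * eWt d w e := by
  have hq0 : (0:ℝ) < q := by linarith
  apply Summable.of_nonneg_of_le
    (fun e => mul_nonneg (Real.rpow_nonneg (abs_nonneg _) _) (eWt_pos w hw e).le)
    (f := fun e => 2 ^ q * (|J e| ^ q * eWt d w e) + 2 ^ q * (|J' e| ^ q * eWt d w e))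
  · intro e
    have h1 : |(J - J') e| ≤ 2 * max |J e| |J' e| := by
      have := abs_sub (J e) (J' e)
      simp only [Pi.sub_apply]
      have h2 : |J e| ≤ max |J e| |J' e| := le_max_left _ _
      have h3 : |J' e| ≤ max |J e| |J' e| := le_max_right _ _
      calc |J e - J' e| ≤ |J e| + |J' e| := abs_sub _ _
        _ ≤ 2 * max |J e| |J' e| := by linarith
    have h4 : |(J - J') e| ^ q ≤ (2 * max |J e| |J' e|) ^ q :=
      Real.rpow_le_rpow (abs_nonneg _) h1 hq0.le
    have h5 : (2 * max |J e| |J' e|) ^ q = 2 ^ q * (max |J e| |J' e|) ^ q :=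
      Real.mul_rpow (by norm_num) (le_max_iff.2 (Or.inl (abs_nonneg _)))
    have h6 : (max |J e| |J' e|) ^ q ≤ |J e| ^ q + |J' e| ^ q := by
      rcases max_cases |J e| |J' e| with ⟨h, _⟩ | ⟨h, _⟩ <;> rw [h]
      · have : (0:ℝ) ≤ |J' e| ^ q := Real.rpow_nonneg (abs_nonneg _) _
        linarith
      · have : (0:ℝ) ≤ |J e| ^ q := Real.rpow_nonneg (abs_nonneg _) _
        linarith
    have hwe := (eWt_pos w hw e).le
    have h2q : (0:ℝ) ≤ 2 ^ q := Real.rpow_nonneg (by norm_num) _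
    calc |(J - J') e| ^ q * eWt d w e
        ≤ 2 ^ q * (|J e| ^ q + |J' e| ^ q) * eWt d w e := by
          apply mul_le_mul_of_nonneg_right _ hwe
          calc |(J - J') e| ^ q ≤ (2 * max |J e| |J' e|) ^ q := h4
            _ = 2 ^ q * (max |J e| |J' e|) ^ q := h5
            _ ≤ 2 ^ q * (|J e| ^ q + |J' e| ^ q) := mul_le_mul_of_nonneg_left h6 h2q
      _ = 2 ^ q * (|J e| ^ q * eWt d w e) + 2 ^ q * (|J' e| ^ q * eWt d w e) := by ring
  · exact ((hJ.mul_left _).add (hJ'.mul_left _))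

lemma jnorm_symm (J J' : Edge d → ℝ) :
    JnormQ d w q (J - J') = JnormQ d w q (J' - J) := by
  unfold Paper.JnormQ
  apply tsum_congr
  intro e
  simp only [Pi.sub_apply]
  rw [abs_sub_comm]

lemma Q_le_pnorm (p : ℝ) (hw : ∀ x, 0 < w x) (Δ : Finset (Site d)) {ξ : Config d}
    (hξ : ξ ∈ SpSet d w p) :
    ∑ x ∈ TT d Δ, |ξ x| ^ p ≤ (∑ x ∈ TT d Δ, (w x)⁻¹) * pnormP d w p ξ := by
  have hpn : ∀ x, |ξ x| ^ p * w x ≤ pnormP d w p ξ := by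
    intro x
    exact hξ.le_tsum x fun j _ => mul_nonneg (Real.rpow_nonneg (abs_nonneg _) _) (hw j).le
  have : ∀ x ∈ TT d Δ, |ξ x| ^ p ≤ (w x)⁻¹ * pnormP d w p ξ := by
    intro x _
    rw [← div_eq_inv_mul, le_div_iff₀ (hw x)]
    exact hpn x
  calc ∑ x ∈ TT d Δ, |ξ x| ^ p ≤ ∑ x ∈ TT d Δ, (w x)⁻¹ * pnormP d w p ξ :=
        Finset.sum_le_sum this
    _ = (∑ x ∈ TT d Δ, (w x)⁻¹) * pnormP d w p ξ := by rw [Finset.sum_mul]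

lemma energy_sub (Δ : Finset (Site d)) (J J' : Edge d → ℝ) (ξ : Config d)
    (σ : (x : Δ) → ℝ) :
    energy d Δ (J - J') σ ξ = energy d Δ J σ ξ - energy d Δ J' σ ξ := by
  unfold Paper.energy
  rw [← Finset.sum_sub_distrib]
  apply Finset.sum_congr rfl
  intro e _
  simp only [Pi.sub_apply]
  ring

end Norms


/-- `λ(Δ,R)` -/
def lamD (w : Site d → ℝ) (q R : ℝ) (Δ : Finset (Site d)) : ℝ :=
  (∑ e ∈ edgesIn d Δ, (R ^ q / eWt d w e) ^ (1 / q)) + 1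

/-- `c(Δ)` -/
def cD (w : Site d → ℝ) (q : ℝ) (Δ : Finset (Site d)) : ℝ :=
  ∑ e ∈ edgesIn d Δ, ((eWt d w e) ^ (1 / q))⁻¹

/-- `c_T(Δ)` -/
def cTD (w : Site d → ℝ) (Δ : Finset (Site d)) : ℝ := ∑ x ∈ TT d Δ, (w x)⁻¹

/-- the constant in the moment estimate -/
def GaD (χ : Site d → Measure ℝ) (p lam : ℝ) (n : ℕ) : ℝ :=
  2 * lam + n * (Real.log (max 1 (Cplus d χ p (lam + 1)).toReal)
    + |Real.log (Cminus d χ p lam).toReal|)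

/-- `Θ₁(Δ,R)` -/
def T1D (χ : Site d → Measure ℝ) (w : Site d → ℝ) (q p R : ℝ) (Δ : Finset (Site d)) : ℝ :=
  4 * cD w q Δ * (1 + GaD χ p (lamD w q R Δ) Δ.card) + 1

/-- `Θ₂(Δ,R)` -/
def T2D (χ : Site d → Measure ℝ) (w : Site d → ℝ) (q p R : ℝ) (Δ : Finset (Site d)) : ℝ :=
  4 * cD w q Δ * ((1 + 2 * lamD w q R Δ) * cTD w Δ) + 1

section Main2

variable (χ : Site d → Measure ℝ) [∀ x, IsProbabilityMeasure (χ x)]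

lemma lamD_pos (w : Site d → ℝ) (hw_pos : ∀ x, 0 < w x) (q R : ℝ) (hq0 : 0 < q) (hR : 0 < R)
    (Δ : Finset (Site d)) : 1 ≤ lamD w q R Δ := by
  unfold lamD
  have : 0 ≤ ∑ e ∈ edgesIn d Δ, (R ^ q / eWt d w e) ^ (1 / q) :=
    Finset.sum_nonneg fun e _ => Real.rpow_nonneg
      (div_nonneg (Real.rpow_nonneg hR.le _) (eWt_pos w hw_pos _).le) _
  linarith

lemma cD_nonneg (w : Site d → ℝ) (hw_pos : ∀ x, 0 < w x) (q : ℝ) (Δ : Finset (Site d)) :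
    0 ≤ cD w q Δ :=
  Finset.sum_nonneg fun e _ => inv_nonneg.2 (Real.rpow_nonneg (eWt_pos w hw_pos e).le _)

lemma cTD_nonneg (w : Site d → ℝ) (hw_pos : ∀ x, 0 < w x) (Δ : Finset (Site d)) :
    0 ≤ cTD w Δ :=
  Finset.sum_nonneg fun x _ => (inv_nonneg.2 (hw_pos x).le)

lemma GaD_nonneg (p lam : ℝ) (hlam : 1 ≤ lam) (n : ℕ) : 0 ≤ GaD χ p lam n := by
  unfold GaD
  have h1 : 0 ≤ Real.log (max 1 (Cplus d χ p (lam + 1)).toReal) :=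
    Real.log_nonneg (le_max_left _ _)
  have h2 : 0 ≤ |Real.log (Cminus d χ p lam).toReal| := abs_nonneg _
  have h3 : (0:ℝ) ≤ n := Nat.cast_nonneg _
  have h4 : (0:ℝ) ≤ n * (Real.log (max 1 (Cplus d χ p (lam + 1)).toReal)
      + |Real.log (Cminus d χ p lam).toReal|) := mul_nonneg h3 (add_nonneg h1 h2)
  linarith

lemma abs_int_le {α : Type*} [MeasurableSpace α] (μ : Measure α) (g : α → ℝ) :
    |∫ x, g x ∂μ| ≤ ∫ x, |g x| ∂μ := by
  simpa [Real.norm_eq_abs] using norm_integral_le_integral_norm (μ := μ) g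

set_option maxHeartbeats 1000000 in
lemma key (w : Site d → ℝ) (hw_pos : ∀ x, 0 < w x)
    (q p : ℝ) (hq : 1 < q) (hp2 : 2 ≤ p)
    (hCp : ∀ l : ℝ, 0 < l → Cplus d χ p l < ⊤)
    (hCm : ∀ l : ℝ, 0 < l → 0 < Cminus d χ p l)
    (Δ : Finset (Site d)) (R : ℝ) (hR : 0 < R)
    (J J' : Edge d → ℝ) (hJ : J ∈ JqSet d w q) (hJ' : J' ∈ JqSet d w q)
    (hJR : JnormQ d w q J ≤ R ^ q) (hJ'R : JnormQ d w q J' ≤ R ^ q)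
    (f : BoundedContinuousFunction (Config d) ℝ) (ξ : Config d) (hξ : ξ ∈ SpSet d w p)
    (hzz : ∫ σ, Real.exp (energy d Δ J' σ ξ) ∂(refMeas d χ Δ)
           ≤ ∫ σ, Real.exp (energy d Δ J σ ξ) ∂(refMeas d χ Δ)) :
    |(∫ σ, f σ ∂(gibbsKernel d χ Δ J ξ)) - ∫ σ, f σ ∂(gibbsKernel d χ Δ J' ξ)|
      ≤ (JnormQ d w q (J - J')) ^ (1 / q) * ‖f‖ *
        (T1D χ w q p R Δ + T2D χ w q p R Δ * pnormP d w p ξ) := by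
  have hq0 : (0:ℝ) < q := by linarith
  set μ0 := refMeas d χ Δ with hμ0
  set P : ((x : Δ) → ℝ) → ℝ := fun σ => ∑ x : Δ, |σ x| ^ p with hPdef
  have hPn : ∀ σ, 0 ≤ P σ := fun σ =>
    Finset.sum_nonneg fun _ _ => Real.rpow_nonneg (abs_nonneg _) _
  set Q : ℝ := ∑ x ∈ TT d Δ, |ξ x| ^ p with hQdef
  have hQ0 : 0 ≤ Q :=
    Finset.sum_nonneg fun _ _ => Real.rpow_nonneg (abs_nonneg _) _
  set lam : ℝ := lamD w q R Δ with hlamdef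
  have hlam1 : 1 ≤ lam := lamD_pos w hw_pos q R hq0 hR Δ
  have hlam0 : 0 < lam := lt_of_lt_of_le one_pos hlam1
  -- energy bounds for J and J'
  have hEbd : ∀ K : Edge d → ℝ, K ∈ JqSet d w q → JnormQ d w q K ≤ R ^ q →
      ∀ σ : (x : Δ) → ℝ, |energy d Δ K σ ξ| ≤ lam * (1 + P σ + Q) := by
    intro K hK hKR σ
    have h := energy_bound hp2 Δ ξ K (fun e => (R ^ q / eWt d w e) ^ (1 / q))
      (fun e _ => edge_bound w q hw_pos hq0 hK hKR e) σ
    have h2 : (∑ e ∈ edgesIn d Δ, (R ^ q / eWt d w e) ^ (1 / q)) * (1 + P σ + Q)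
        ≤ lam * (1 + P σ + Q) := by
      apply mul_le_mul_of_nonneg_right _ (by have := hPn σ; linarith)
      rw [hlamdef]; unfold lamD; linarith
    exact le_trans h h2
  obtain ⟨hintJ, hlowJ, hZJ, hintPJ, hmomJ⟩ :=
    mainK χ p hp2 hCp hCm Δ ξ lam Q hlam1 hQ0 J (hEbd J hJ hJR)
  obtain ⟨hintJ', hlowJ', hZJ', hintPJ', hmomJ'⟩ :=
    mainK χ p hp2 hCp hCm Δ ξ lam Q hlam1 hQ0 J' (hEbd J' hJ' hJ'R)
  set ρJ : ((x : Δ) → ℝ) → ℝ := fun σ => Real.exp (energy d Δ J σ ξ) with hρJ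
  set ρJ' : ((x : Δ) → ℝ) → ℝ := fun σ => Real.exp (energy d Δ J' σ ξ) with hρJ'
  set zJ := ∫ σ, ρJ σ ∂μ0 with hzJdef
  set zJ' := ∫ σ, ρJ' σ ∂μ0 with hzJ'def
  have hcm : 0 < (Cminus d χ p lam).toReal := cminus_toReal_pos χ p lam hlam0 (hCm lam hlam0)
  have hzJ : 0 < zJ :=
    lt_of_lt_of_le (mul_pos (Real.exp_pos _) (pow_pos hcm _)) hlowJ
  have hzJ' : 0 < zJ' :=
    lt_of_lt_of_le (mul_pos (Real.exp_pos _) (pow_pos hcm _)) hlowJ'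
  obtain ⟨hreprJ, hNintJ⟩ := gibbs_repr χ Δ J ξ hintJ hzJ hZJ f
  obtain ⟨hreprJ', hNintJ'⟩ := gibbs_repr χ Δ J' ξ hintJ' hzJ' hZJ' f
  rw [hreprJ, hreprJ']
  -- the difference of energies
  set dnorm : ℝ := JnormQ d w q (J - J') with hdnorm
  have hdnorm0 : 0 ≤ dnorm := tsum_nonneg fun e =>
    mul_nonneg (Real.rpow_nonneg (abs_nonneg _) _) (eWt_pos w hw_pos e).le
  set δ : ℝ := dnorm ^ (1 / q) with hδdef
  have hδ0 : 0 ≤ δ := Real.rpow_nonneg hdnorm0 _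
  have hsubsum : Summable fun e => |(J - J') e| ^ q * eWt d w e :=
    sub_summable w q hw_pos hq.le hJ hJ'
  set c : ℝ := cD w q Δ with hcdef
  have hc0 : 0 ≤ c := cD_nonneg w hw_pos q Δ
  set AE : ((x : Δ) → ℝ) → ℝ := fun σ => |energy d Δ J σ ξ - energy d Δ J' σ ξ| with hAE
  have hAEmeas : Measurable AE :=
    ((meas_energy Δ J ξ).sub (meas_energy Δ J' ξ)).abs
  have hAEb : ∀ σ, AE σ ≤ δ * c * (1 + P σ + Q) := by
    intro σ
    have hper : ∀ e ∈ edgesIn d Δ, |(J - J') e| ≤ δ * ((eWt d w e) ^ (1 / q))⁻¹ := by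
      intro e _
      have h := edge_bound w q hw_pos hq0 hsubsum (le_refl (JnormQ d w q (J - J'))) e
      rwa [Real.div_rpow hdnorm0 (eWt_pos w hw_pos e).le, div_eq_mul_inv] at h
    have h := energy_bound hp2 Δ ξ (J - J')
      (fun e => δ * ((eWt d w e) ^ (1 / q))⁻¹) hper σ
    rw [energy_sub Δ J J' ξ σ] at h
    have hsum : ∑ e ∈ edgesIn d Δ, δ * ((eWt d w e) ^ (1 / q))⁻¹ = δ * c := by
      rw [hcdef]; unfold cD; rw [Finset.mul_sum]
    rw [hsum] at h
    exact h
  -- the G integrals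
  set Ga : ℝ := GaD χ p lam Δ.card with hGadef
  have hGa0 : 0 ≤ Ga := GaD_nonneg χ p lam hlam1 Δ.card
  have hmomJ2 : ∫ σ, P σ * ρJ σ ∂μ0 ≤ (Ga + 2 * lam * Q) * zJ := by
    refine le_trans hmomJ (le_of_eq ?_)
    rw [hGadef]; unfold GaD; ring
  have hmomJ2' : ∫ σ, P σ * ρJ' σ ∂μ0 ≤ (Ga + 2 * lam * Q) * zJ' := by
    refine le_trans hmomJ' (le_of_eq ?_)
    rw [hGadef]; unfold GaD; ring
  have hGint : ∀ (K : Edge d → ℝ) (ρ : ((x : Δ) → ℝ) → ℝ), ρ = (fun σ => Real.exp (energy d Δ K σ ξ)) →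
      Integrable ρ μ0 → Integrable (fun σ => P σ * ρ σ) μ0 →
      Integrable (fun σ => AE σ * ρ σ) μ0 := by
    intro K ρ hρ hint hintP
    apply Integrable.mono' ((hint.const_mul (δ * c * (1 + Q))).add (hintP.const_mul (δ * c)))
      (hAEmeas.mul (by rw [hρ]; exact (meas_energy Δ K ξ).exp)).aestronglyMeasurable
    filter_upwards with σ
    have hρpos : 0 < ρ σ := by rw [hρ]; exact Real.exp_pos _
    have h0 : 0 ≤ AE σ * ρ σ := mul_nonneg (abs_nonneg _) hρpos.le
    rw [Pi.mul_apply, Real.norm_eq_abs, abs_of_nonneg h0]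
    calc AE σ * ρ σ ≤ (δ * c * (1 + P σ + Q)) * ρ σ :=
          mul_le_mul_of_nonneg_right (hAEb σ) hρpos.le
      _ = δ * c * (1 + Q) * ρ σ + δ * c * (P σ * ρ σ) := by ring
  have hGintJ : Integrable (fun σ => AE σ * ρJ σ) μ0 := hGint J ρJ rfl hintJ hintPJ
  have hGintJ' : Integrable (fun σ => AE σ * ρJ' σ) μ0 := hGint J' ρJ' rfl hintJ' hintPJ'
  set GJ := ∫ σ, AE σ * ρJ σ ∂μ0 with hGJdef
  set GJ' := ∫ σ, AE σ * ρJ' σ ∂μ0 with hGJ'def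
  have hGJ0 : 0 ≤ GJ := integral_nonneg fun σ => mul_nonneg (abs_nonneg _) (Real.exp_pos _).le
  have hGJ'0 : 0 ≤ GJ' := integral_nonneg fun σ => mul_nonneg (abs_nonneg _) (Real.exp_pos _).le
  have hGbd : ∀ (ρ : ((x : Δ) → ℝ) → ℝ), (∀ σ, 0 < ρ σ) →
      Integrable ρ μ0 → Integrable (fun σ => P σ * ρ σ) μ0 →
      Integrable (fun σ => AE σ * ρ σ) μ0 →
      (∫ σ, P σ * ρ σ ∂μ0 ≤ (Ga + 2 * lam * Q) * ∫ σ, ρ σ ∂μ0) →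
      ∫ σ, AE σ * ρ σ ∂μ0
        ≤ δ * c * ((1 + Ga) + (1 + 2 * lam) * Q) * ∫ σ, ρ σ ∂μ0 := by
    intro ρ hρpos hint hintP hintA hmom
    have step1 : ∫ σ, AE σ * ρ σ ∂μ0
        ≤ ∫ σ, (δ * c * (1 + Q)) * ρ σ + (δ * c) * (P σ * ρ σ) ∂μ0 := by
      apply integral_mono hintA ((hint.const_mul _).add (hintP.const_mul _))
      intro σ
      calc AE σ * ρ σ ≤ (δ * c * (1 + P σ + Q)) * ρ σ :=
            mul_le_mul_of_nonneg_right (hAEb σ) (hρpos σ).le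
        _ ≤ (δ * c * (1 + Q)) * ρ σ + (δ * c) * (P σ * ρ σ) := by
            have : (δ * c * (1 + P σ + Q)) * ρ σ
                = (δ * c * (1 + Q)) * ρ σ + (δ * c) * (P σ * ρ σ) := by ring
            linarith
    have step2 : ∫ σ, (δ * c * (1 + Q)) * ρ σ + (δ * c) * (P σ * ρ σ) ∂μ0
        = (δ * c * (1 + Q)) * (∫ σ, ρ σ ∂μ0) + (δ * c) * ∫ σ, P σ * ρ σ ∂μ0 := by
      rw [integral_add (hint.const_mul _) (hintP.const_mul _),
        integral_const_mul, integral_const_mul]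
    have hz0 : 0 ≤ ∫ σ, ρ σ ∂μ0 := integral_nonneg fun σ => (hρpos σ).le
    have step3 : (δ * c) * ∫ σ, P σ * ρ σ ∂μ0
        ≤ (δ * c) * ((Ga + 2 * lam * Q) * ∫ σ, ρ σ ∂μ0) :=
      mul_le_mul_of_nonneg_left hmom (mul_nonneg hδ0 hc0)
    calc ∫ σ, AE σ * ρ σ ∂μ0
        ≤ (δ * c * (1 + Q)) * (∫ σ, ρ σ ∂μ0) + (δ * c) * ∫ σ, P σ * ρ σ ∂μ0 := by
          rw [← step2]; exact step1
      _ ≤ (δ * c * (1 + Q)) * (∫ σ, ρ σ ∂μ0)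
          + (δ * c) * ((Ga + 2 * lam * Q) * ∫ σ, ρ σ ∂μ0) := by linarith
      _ = δ * c * ((1 + Ga) + (1 + 2 * lam) * Q) * ∫ σ, ρ σ ∂μ0 := by ring
  have hGJle : GJ ≤ δ * c * ((1 + Ga) + (1 + 2 * lam) * Q) * zJ :=
    hGbd ρJ (fun σ => Real.exp_pos _) hintJ hintPJ hGintJ hmomJ2
  have hGJ'le : GJ' ≤ δ * c * ((1 + Ga) + (1 + 2 * lam) * Q) * zJ' :=
    hGbd ρJ' (fun σ => Real.exp_pos _) hintJ' hintPJ' hGintJ' hmomJ2'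
  -- the difference estimates
  set F : ((x : Δ) → ℝ) → ℝ := fun σ => f (glue d Δ σ ξ) with hF
  have hFb : ∀ σ, |F σ| ≤ ‖f‖ := fun σ => f.norm_coe_le_norm _
  set NJ := ∫ σ, F σ * ρJ σ ∂μ0 with hNJ
  set NJ' := ∫ σ, F σ * ρJ' σ ∂μ0 with hNJ'
  set SG := GJ + GJ' with hSG
  have hSGint : Integrable (fun σ => AE σ * ρJ σ + AE σ * ρJ' σ) μ0 := hGintJ.add hGintJ'
  have hρsub : ∀ σ, |ρJ σ - ρJ' σ| ≤ AE σ * ρJ σ + AE σ * ρJ' σ := by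
    intro σ
    have := abs_exp_sub_exp (energy d Δ J σ ξ) (energy d Δ J' σ ξ)
    calc |ρJ σ - ρJ' σ| ≤ AE σ * (ρJ σ + ρJ' σ) := this
      _ = AE σ * ρJ σ + AE σ * ρJ' σ := by ring
  have hzsub : |zJ - zJ'| ≤ SG := by
    have h1 : zJ - zJ' = ∫ σ, ρJ σ - ρJ' σ ∂μ0 := (integral_sub hintJ hintJ').symm
    rw [h1]
    calc |∫ σ, ρJ σ - ρJ' σ ∂μ0| ≤ ∫ σ, |ρJ σ - ρJ' σ| ∂μ0 := abs_int_le μ0 _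
      _ ≤ ∫ σ, AE σ * ρJ σ + AE σ * ρJ' σ ∂μ0 :=
          integral_mono (hintJ.sub hintJ').abs hSGint hρsub
      _ = SG := by rw [integral_add hGintJ hGintJ']
  have hNsub : |NJ - NJ'| ≤ ‖f‖ * SG := by
    have h1 : NJ - NJ' = ∫ σ, F σ * ρJ σ - F σ * ρJ' σ ∂μ0 :=
      (integral_sub hNintJ hNintJ').symm
    rw [h1]
    calc |∫ σ, F σ * ρJ σ - F σ * ρJ' σ ∂μ0|
        ≤ ∫ σ, |F σ * ρJ σ - F σ * ρJ' σ| ∂μ0 := abs_int_le μ0 _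
      _ ≤ ∫ σ, ‖f‖ * (AE σ * ρJ σ + AE σ * ρJ' σ) ∂μ0 := by
          apply integral_mono (hNintJ.sub hNintJ').abs (hSGint.const_mul _)
          intro σ
          calc |F σ * ρJ σ - F σ * ρJ' σ| = |F σ * (ρJ σ - ρJ' σ)| := by ring_nf
            _ = |F σ| * |ρJ σ - ρJ' σ| := abs_mul _ _
            _ ≤ ‖f‖ * (AE σ * ρJ σ + AE σ * ρJ' σ) :=
                mul_le_mul (hFb σ) (hρsub σ) (abs_nonneg _) (norm_nonneg f)
      _ = ‖f‖ * SG := by rw [integral_const_mul, integral_add hGintJ hGintJ']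
  have hB : |NJ'| ≤ ‖f‖ * zJ' := by
    calc |NJ'| ≤ ∫ σ, |F σ * ρJ' σ| ∂μ0 := by rw [hNJ']; exact abs_int_le μ0 _
      _ ≤ ∫ σ, ‖f‖ * ρJ' σ ∂μ0 := by
          apply integral_mono hNintJ'.abs (hintJ'.const_mul _)
          intro σ
          calc |F σ * ρJ' σ| = |F σ| * ρJ' σ := by
                rw [abs_mul, abs_of_pos (Real.exp_pos _)]
            _ ≤ ‖f‖ * ρJ' σ := mul_le_mul_of_nonneg_right (hFb σ) (Real.exp_pos _).le
      _ = ‖f‖ * zJ' := by rw [integral_const_mul]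
  -- the final algebra
  have hSG0 : 0 ≤ SG := add_nonneg hGJ0 hGJ'0
  have hf0 : (0:ℝ) ≤ ‖f‖ := norm_nonneg f
  have hdiff : |NJ / zJ - NJ' / zJ'| ≤ 2 * ‖f‖ * SG / zJ := by
    have hnum : NJ / zJ - NJ' / zJ' = ((NJ - NJ') * zJ' + NJ' * (zJ' - zJ)) / (zJ * zJ') := by
      field_simp
      ring
    rw [hnum, abs_div, abs_of_pos (mul_pos hzJ hzJ')]
    have hnumbd : |(NJ - NJ') * zJ' + NJ' * (zJ' - zJ)| ≤ 2 * ‖f‖ * SG * zJ' := by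
      have h1 : |(NJ - NJ') * zJ' + NJ' * (zJ' - zJ)|
          ≤ |NJ - NJ'| * zJ' + |NJ'| * |zJ' - zJ| := by
        calc |(NJ - NJ') * zJ' + NJ' * (zJ' - zJ)|
            ≤ |(NJ - NJ') * zJ'| + |NJ' * (zJ' - zJ)| := abs_add_le _ _
          _ = |NJ - NJ'| * zJ' + |NJ'| * |zJ' - zJ| := by
              rw [abs_mul, abs_mul, abs_of_pos hzJ']
      have h2 : |zJ' - zJ| ≤ SG := by rw [abs_sub_comm]; exact hzsub
      have h3 : |NJ - NJ'| * zJ' ≤ (‖f‖ * SG) * zJ' :=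
        mul_le_mul_of_nonneg_right hNsub hzJ'.le
      have h4 : |NJ'| * |zJ' - zJ| ≤ (‖f‖ * zJ') * SG :=
        mul_le_mul hB h2 (abs_nonneg _) (mul_nonneg hf0 hzJ'.le)
      have h5 : (‖f‖ * SG) * zJ' + (‖f‖ * zJ') * SG = 2 * ‖f‖ * SG * zJ' := by ring
      linarith
    calc |(NJ - NJ') * zJ' + NJ' * (zJ' - zJ)| / (zJ * zJ')
        ≤ (2 * ‖f‖ * SG * zJ') / (zJ * zJ') := by gcongr
      _ = 2 * ‖f‖ * SG / zJ := by
          rw [mul_comm zJ zJ', ← div_div, mul_div_assoc, div_self hzJ'.ne', mul_one]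
  -- assemble
  set X : ℝ := δ * c * ((1 + Ga) + (1 + 2 * lam) * Q) with hX
  have hX0 : 0 ≤ X := by
    have h6 : (0:ℝ) ≤ (1 + Ga) + (1 + 2 * lam) * Q :=
      add_nonneg (by linarith) (mul_nonneg (by linarith) hQ0)
    exact mul_nonneg (mul_nonneg hδ0 hc0) h6
  have hstep2 : 2 * ‖f‖ * SG / zJ ≤ 4 * ‖f‖ * X := by
    have hGJdiv : GJ / zJ ≤ X := (div_le_iff₀ hzJ).2 hGJle
    have hGJ'div : GJ' / zJ' ≤ X := (div_le_iff₀ hzJ').2 hGJ'le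
    have hmono : GJ' / zJ ≤ GJ' / zJ' := by gcongr
    have hsplit : 2 * ‖f‖ * SG / zJ = 2 * ‖f‖ * (GJ / zJ + GJ' / zJ) := by
      rw [hSG]
      field_simp
    rw [hsplit]
    have hsum : GJ / zJ + GJ' / zJ ≤ X + X := add_le_add hGJdiv (hmono.trans hGJ'div)
    calc 2 * ‖f‖ * (GJ / zJ + GJ' / zJ) ≤ 2 * ‖f‖ * (X + X) :=
          mul_le_mul_of_nonneg_left hsum (by positivity)
      _ = 4 * ‖f‖ * X := by ring
  have hQle : Q ≤ cTD w Δ * pnormP d w p ξ := Q_le_pnorm w p hw_pos Δ hξ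
  have hpn0 : 0 ≤ pnormP d w p ξ := tsum_nonneg fun x =>
    mul_nonneg (Real.rpow_nonneg (abs_nonneg _) _) (hw_pos x).le
  have hcT0 : 0 ≤ cTD w Δ := cTD_nonneg w hw_pos Δ
  have hT1 : T1D χ w q p R Δ = 4 * c * (1 + Ga) + 1 := by
    rw [hcdef, hGadef, hlamdef]; unfold T1D; rfl
  have hT2 : T2D χ w q p R Δ = 4 * c * ((1 + 2 * lam) * cTD w Δ) + 1 := by
    rw [hcdef, hlamdef]; unfold T2D; rfl
  have hA : 4 * c * ((1 + Ga) + (1 + 2 * lam) * Q)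
      ≤ T1D χ w q p R Δ + T2D χ w q p R Δ * pnormP d w p ξ := by
    rw [hT1, hT2]
    have hco : (0:ℝ) ≤ 4 * c * (1 + 2 * lam) :=
      mul_nonneg (by linarith) (by linarith)
    have h7 := mul_le_mul_of_nonneg_left hQle hco
    linarith [hpn0]
  calc |NJ / zJ - NJ' / zJ'| ≤ 2 * ‖f‖ * SG / zJ := hdiff
    _ ≤ 4 * ‖f‖ * X := hstep2
    _ = δ * ‖f‖ * (4 * c * ((1 + Ga) + (1 + 2 * lam) * Q)) := by rw [hX]; ring
    _ ≤ δ * ‖f‖ * (T1D χ w q p R Δ + T2D χ w q p R Δ * pnormP d w p ξ) :=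
        mul_le_mul_of_nonneg_left hA (mul_nonneg hδ0 hf0)

end Main2

end LipAux

/-- Lemma 4.4 (Lipschitz continuity in `J`). -/
theorem lipschitz_in_J (d : ℕ) (hd : 0 < d)
    (w : Site d → ℝ) (hw_pos : ∀ x, 0 < w x) (hw_one : ∀ x, w x ≤ 1) (hw_sum : Summable w)
    (w₀ : ℝ) (hw₀ : 0 < w₀) (hw_nb : ∀ x : Site d, ∀ y ∈ nbrs d x, w x ≤ w₀ * w y)
    (q p : ℝ) (hq : 1 < q) (hp : p = 2 * q / (q - 1))
    (χ : Site d → Measure ℝ) [∀ x, IsProbabilityMeasure (χ x)]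
    (hCp : ∀ l : ℝ, 0 < l → Cplus d χ p l < ⊤)
    (hCm : ∀ l : ℝ, 0 < l → 0 < Cminus d χ p l) :
    ∀ (Δ : Finset (Site d)) (R : ℝ), 0 < R → ∃ T₁ T₂ : ℝ, 0 < T₁ ∧ 0 < T₂ ∧
      ∀ J J' : Edge d → ℝ, J ∈ JqSet d w q → J' ∈ JqSet d w q →
        JnormQ d w q J ≤ R ^ q → JnormQ d w q J' ≤ R ^ q →
        ∀ f : BoundedContinuousFunction (Config d) ℝ, ∀ ξ ∈ SpSet d w p,
          |(∫ σ, f σ ∂(gibbsKernel d χ Δ J ξ)) - ∫ σ, f σ ∂(gibbsKernel d χ Δ J' ξ)|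
            ≤ (JnormQ d w q (J - J')) ^ (1 / q) * ‖f‖ * (T₁ + T₂ * pnormP d w p ξ) := by
  intro Δ R hR
  have hq0 : (0:ℝ) < q := by linarith
  have hq1 : (0:ℝ) < q - 1 := by linarith
  have hp2 : 2 ≤ p := by
    have hpe : p = 2 + 2 / (q - 1) := by
      rw [hp]; field_simp; ring
    have h2 : 0 < 2 / (q - 1) := by positivity
    linarith
  have hlam1 : 1 ≤ LipAux.lamD w q R Δ := LipAux.lamD_pos w hw_pos q R hq0 hR Δ
  have hc0 : 0 ≤ LipAux.cD w q Δ := LipAux.cD_nonneg w hw_pos q Δ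
  have hGa0 : 0 ≤ LipAux.GaD χ p (LipAux.lamD w q R Δ) Δ.card :=
    LipAux.GaD_nonneg χ p (LipAux.lamD w q R Δ) hlam1 Δ.card
  have hcT0 : 0 ≤ LipAux.cTD w Δ := LipAux.cTD_nonneg w hw_pos Δ
  refine ⟨LipAux.T1D χ w q p R Δ, LipAux.T2D χ w q p R Δ, ?_, ?_, ?_⟩
  · unfold LipAux.T1D
    have h1 : 0 ≤ 4 * LipAux.cD w q Δ * (1 + LipAux.GaD χ p (LipAux.lamD w q R Δ) Δ.card) :=
      mul_nonneg (by linarith) (by linarith)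
    linarith
  · unfold LipAux.T2D
    have h1 : 0 ≤ 4 * LipAux.cD w q Δ *
        ((1 + 2 * LipAux.lamD w q R Δ) * LipAux.cTD w Δ) :=
      mul_nonneg (by linarith) (mul_nonneg (by linarith) hcT0)
    linarith
  · intro J J' hJ hJ' hJR hJ'R f ξ hξ
    rcases le_total (∫ σ, Real.exp (energy d Δ J' σ ξ) ∂(refMeas d χ Δ))
      (∫ σ, Real.exp (energy d Δ J σ ξ) ∂(refMeas d χ Δ)) with h | h
    · exact LipAux.key χ w hw_pos q p hq hp2 hCp hCm Δ R hR J J' hJ hJ' hJR hJ'R f ξ hξ h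
    · have hkey := LipAux.key χ w hw_pos q p hq hp2 hCp hCm Δ R hR J' J hJ' hJ hJ'R hJR
        f ξ hξ h
      rw [← LipAux.jnorm_symm w q J J'] at hkey
      rw [abs_sub_comm] at hkey
      exact hkey
end
end

section
/- (One-point estimate) For every λ > 0 and κ > 0, every x ∈ ℤ^d, every J ∈ 𝒥_q and every ξ ∈ ℝ^{ℤ^d}, the single-site kernel π_x := π_{{x}} satisfies ∫_{ℝ^{ℤ^d}} exp(λ|σ(x)|^p) π_x(dσ|J,ξ) ≤ exp( C(λ,κ) + 2κ Σ_{y∼x} |ξ(y)|^p + 2κ^{1−q} Σ_{y∼x} |J_{xy}|^q ), where C(λ,κ) = log C₊(λ + 2dκ) − log C₋(2dκ). -/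
open MeasureTheory ENNReal Filter Topology

noncomputable section

open Paper

/-! ### Auxiliary lemmas -/

section Aux

open Real in
lemma young3 {q p k : ℝ} (hq : 1 < q) (hp : p = 2 * q / (q - 1)) (hk : 0 < k)
    (J a b : ℝ) :
    |J * a * b| ≤ k ^ (1 - q) * |J| ^ q + k / 2 * (|a| ^ p + |b| ^ p) := by
  have hq0 : 0 < q := lt_trans one_pos hq
  have hq1 : 0 < q - 1 := sub_pos.2 hq
  have hconj : q.HolderConjugate (q / (q - 1)) := Real.HolderConjugate.conjExponent hq
  set q' := q / (q - 1) with hq'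
  have hq'1 : 1 < q' := hconj.symm.lt
  have habs : |J * a * b| = |J| * (|a| * |b|) := by rw [abs_mul, abs_mul, mul_assoc]
  set c := |a| * |b| with hc
  have hc0 : 0 ≤ c := mul_nonneg (abs_nonneg a) (abs_nonneg b)
  have key : |J| * c ≤ (k ^ ((1 - q)/q) * |J|) ^ q / q + (k ^ ((q-1)/q) * c) ^ q' / q' := by
    have h0 : |J| * c = (k ^ ((1 - q)/q) * |J|) * (k ^ ((q-1)/q) * c) := by
      rw [mul_mul_mul_comm, ← Real.rpow_add hk,
        show (1-q)/q + (q-1)/q = 0 by field_simp; ring, Real.rpow_zero, one_mul]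
    rw [h0]
    exact Real.young_inequality_of_nonneg
      (mul_nonneg (Real.rpow_nonneg hk.le _) (abs_nonneg J))
      (mul_nonneg (Real.rpow_nonneg hk.le _) hc0) hconj
  have e1 : (k ^ ((1 - q)/q) * |J|) ^ q = k ^ (1 - q) * |J| ^ q := by
    rw [Real.mul_rpow (Real.rpow_nonneg hk.le _) (abs_nonneg J),
      ← Real.rpow_mul hk.le, show (1-q)/q * q = 1 - q by field_simp]
  have hq'p : q' = p / 2 := by rw [hq', hp]; ring
  have e2 : (k ^ ((q-1)/q) * c) ^ q' = k * c ^ q' := by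
    rw [Real.mul_rpow (Real.rpow_nonneg hk.le _) hc0,
      ← Real.rpow_mul hk.le, show (q-1)/q * q' = 1 by rw [hq']; field_simp,
      Real.rpow_one]
  have e3 : c ^ q' ≤ (|a| ^ p + |b| ^ p) / 2 := by
    rw [hq'p, hc, Real.mul_rpow (abs_nonneg a) (abs_nonneg b)]
    have h2 : |a| ^ (p/2) * |b| ^ (p/2) ≤ ((|a| ^ (p/2))^2 + (|b| ^ (p/2))^2) / 2 := by
      nlinarith [sq_nonneg (|a| ^ (p/2) - |b| ^ (p/2))]
    have hsq : ∀ t : ℝ, 0 ≤ t → (t ^ (p/2))^2 = t ^ p := by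
      intro t ht
      rw [← Real.rpow_natCast (t ^ (p/2)) 2, ← Real.rpow_mul ht]
      norm_num
    rw [hsq _ (abs_nonneg a), hsq _ (abs_nonneg b)] at h2
    exact h2
  have hkc : 0 ≤ c ^ q' := Real.rpow_nonneg hc0 _
  have hJq : 0 ≤ k ^ (1 - q) * |J| ^ q :=
    mul_nonneg (Real.rpow_nonneg hk.le _) (Real.rpow_nonneg (abs_nonneg J) _)
  calc |J * a * b| = |J| * c := habs
    _ ≤ (k ^ ((1 - q)/q) * |J|) ^ q / q + (k ^ ((q-1)/q) * c) ^ q' / q' := key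
    _ = (k ^ (1 - q) * |J| ^ q) / q + (k * c ^ q') / q' := by rw [e1, e2]
    _ ≤ (k ^ (1 - q) * |J| ^ q) + (k * c ^ q') := by
        gcongr
        · exact div_le_self hJq hq.le
        · exact div_le_self (mul_nonneg hk.le hkc) hq'1.le
    _ ≤ k ^ (1 - q) * |J| ^ q + k * ((|a| ^ p + |b| ^ p) / 2) := by gcongr
    _ = k ^ (1 - q) * |J| ^ q + k / 2 * (|a| ^ p + |b| ^ p) := by ring

variable {d : ℕ}

lemma add_unitv_ne (x : Site d) (i : Fin d) : x + unitv d i ≠ x := by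
  intro h
  have := congrFun h i
  simp [unitv] at this

lemma sub_unitv_ne (x : Site d) (i : Fin d) : x - unitv d i ≠ x := by
  intro h
  have := congrFun h i
  simp [unitv] at this

lemma add_unitv_inj (x : Site d) : Function.Injective fun i : Fin d => x + unitv d i := by
  intro i j h
  have := congrFun h i
  simp [unitv] at this
  by_contra hij
  simp [hij, Ne.symm hij] at this

lemma sub_unitv_inj (x : Site d) : Function.Injective fun i : Fin d => x - unitv d i := by
  intro i j h
  have := congrFun h i
  simp [unitv] at this
  by_contra hij
  simp [hij, Ne.symm hij] at this

lemma add_ne_sub (x : Site d) (i j : Fin d) : x + unitv d i ≠ x - unitv d j := by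
  intro h
  have := congrFun h i
  simp only [Pi.add_apply, Pi.sub_apply, unitv, if_pos rfl] at this
  split_ifs at this <;> omega

lemma sum_nbrs (x : Site d) (g : Site d → ℝ) :
    ∑ y ∈ nbrs d x, g y =
      (∑ i : Fin d, g (x + unitv d i)) + ∑ i : Fin d, g (x - unitv d i) := by
  rw [nbrs, Finset.sum_union, Finset.sum_image (fun i _ j _ h => add_unitv_inj x h),
    Finset.sum_image (fun i _ j _ h => sub_unitv_inj x h)]
  rw [Finset.disjoint_left]
  rintro y hy hy'
  simp only [Finset.mem_image, Finset.mem_univ, true_and] at hy hy'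
  obtain ⟨i, rfl⟩ := hy
  obtain ⟨j, hj⟩ := hy'
  exact add_ne_sub x i j hj.symm

lemma sum_nbrEdges (x : Site d) (g : Edge d → ℝ) :
    ∑ e ∈ nbrEdges d x, g e =
      (∑ i : Fin d, g (x, i)) + ∑ i : Fin d, g (x - unitv d i, i) := by
  rw [nbrEdges, Finset.sum_union, Finset.sum_image, Finset.sum_image]
  · intro i _ j _ h
    exact congrArg Prod.snd h
  · intro i _ j _ h
    exact congrArg Prod.snd h
  · rw [Finset.disjoint_left]
    rintro e he he'
    simp only [Finset.mem_image, Finset.mem_univ, true_and] at he he'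
    obtain ⟨i, rfl⟩ := he
    obtain ⟨j, hj⟩ := he'
    exact sub_unitv_ne x j (congrArg Prod.fst hj)

lemma edgesIn_singleton (x : Site d) : edgesIn d {x} = nbrEdges d x :=
  Finset.singleton_biUnion

lemma glue_singleton_self (x : Site d) (σ : (y : ({x} : Finset (Site d))) → ℝ) (ξ : Config d) :
    glue d {x} σ ξ x = σ ⟨x, Finset.mem_singleton_self x⟩ := by
  simp [glue]

lemma glue_singleton_ne (x y : Site d) (hy : y ≠ x)
    (σ : (z : ({x} : Finset (Site d))) → ℝ) (ξ : Config d) :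
    glue d {x} σ ξ y = ξ y := by
  simp [glue, hy]

instance uniqueSingletonFinset (x : Site d) : Unique ↥({x} : Finset (Site d)) :=
  ⟨⟨⟨x, Finset.mem_singleton_self x⟩⟩, fun a => Subtype.ext (Finset.mem_singleton.mp a.2)⟩

/-- rewriting the one-point energy -/
lemma energy_singleton (x : Site d) (J : Edge d → ℝ) (ξ : Config d)
    (σ : (y : ({x} : Finset (Site d))) → ℝ) :
    energy d {x} J σ ξ =
      (∑ i : Fin d, J (x, i) * σ ⟨x, Finset.mem_singleton_self x⟩ * ξ (x + unitv d i)) +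
        ∑ i : Fin d, J (x - unitv d i, i) * ξ (x - unitv d i) *
          σ ⟨x, Finset.mem_singleton_self x⟩ := by
  rw [energy, edgesIn_singleton, sum_nbrEdges]
  congr 1
  · refine Finset.sum_congr rfl fun i _ => ?_
    have h1 : ept d (x, i) = x + unitv d i := rfl
    rw [h1, glue_singleton_self, glue_singleton_ne x _ (add_unitv_ne x i)]
  · refine Finset.sum_congr rfl fun i _ => ?_
    have h1 : ept d (x - unitv d i, i) = x := sub_add_cancel x (unitv d i)
    rw [h1, glue_singleton_self, glue_singleton_ne x _ (sub_unitv_ne x i)]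

lemma energy_singleton_bound {q p k : ℝ} (hq : 1 < q) (hp : p = 2 * q / (q - 1)) (hk : 0 < k)
    (x : Site d) (J : Edge d → ℝ) (ξ : Config d)
    (σ : (y : ({x} : Finset (Site d))) → ℝ) :
    |energy d {x} J σ ξ| ≤
      (k ^ (1 - q) * ∑ e ∈ nbrEdges d x, |J e| ^ q
          + k / 2 * ∑ y ∈ nbrs d x, |ξ y| ^ p)
        + d * k * |σ ⟨x, Finset.mem_singleton_self x⟩| ^ p := by
  set u : ℝ := σ ⟨x, Finset.mem_singleton_self x⟩ with hu
  rw [energy_singleton, sum_nbrEdges x (fun e => |J e| ^ q), sum_nbrs x (fun y => |ξ y| ^ p)]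
  have step1 : |(∑ i : Fin d, J (x, i) * u * ξ (x + unitv d i)) +
      ∑ i : Fin d, J (x - unitv d i, i) * ξ (x - unitv d i) * u| ≤
      (∑ i : Fin d, (k ^ (1 - q) * |J (x, i)| ^ q + k / 2 * (|u| ^ p + |ξ (x + unitv d i)| ^ p)))
        + ∑ i : Fin d, (k ^ (1 - q) * |J (x - unitv d i, i)| ^ q
            + k / 2 * (|ξ (x - unitv d i)| ^ p + |u| ^ p)) := by
    refine (abs_add_le _ _).trans (add_le_add ?_ ?_)
    · refine (Finset.abs_sum_le_sum_abs _ _).trans (Finset.sum_le_sum fun i _ => ?_)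
      exact young3 hq hp hk _ _ _
    · refine (Finset.abs_sum_le_sum_abs _ _).trans (Finset.sum_le_sum fun i _ => ?_)
      exact young3 hq hp hk _ _ _
  refine step1.trans (le_of_eq ?_)
  simp only [Finset.sum_add_distrib, ← Finset.mul_sum, Finset.sum_add_distrib,
    Finset.sum_const, Finset.card_univ, Fintype.card_fin, nsmul_eq_mul]
  ring

end Aux

/-- Lemma 5.1: the one-point estimate. -/
theorem one_point_estimate (d : ℕ) (hd : 0 < d)
    (w : Site d → ℝ) (hw_pos : ∀ x, 0 < w x) (hw_one : ∀ x, w x ≤ 1) (hw_sum : Summable w)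
    (w₀ : ℝ) (hw₀ : 0 < w₀) (hw_nb : ∀ x : Site d, ∀ y ∈ nbrs d x, w x ≤ w₀ * w y)
    (q p : ℝ) (hq : 1 < q) (hp : p = 2 * q / (q - 1))
    (χ : Site d → Measure ℝ) [∀ x, IsProbabilityMeasure (χ x)]
    (hCp : ∀ l : ℝ, 0 < l → Cplus d χ p l < ⊤)
    (hCm : ∀ l : ℝ, 0 < l → 0 < Cminus d χ p l) :
    ∀ l k : ℝ, 0 < l → 0 < k → ∀ x : Site d, ∀ J ∈ JqSet d w q, ∀ ξ : Config d,
      ∫⁻ σ, ENNReal.ofReal (Real.exp (l * |σ x| ^ p))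
          ∂(gibbsKernel d χ ({x} : Finset (Site d)) J ξ)
        ≤ ENNReal.ofReal (Real.exp
            ((Real.log (Cplus d χ p (l + 2 * d * k)).toReal
                - Real.log (Cminus d χ p (2 * d * k)).toReal)
              + 2 * k * ∑ y ∈ nbrs d x, |ξ y| ^ p
              + 2 * k ^ (1 - q) * ∑ e ∈ nbrEdges d x, |J e| ^ q)) := by
  intro l k hl hk x J hJ ξ
  classical
  have hd' : (0:ℝ) < (d:ℝ) := by exact_mod_cast hd
  have hq0 : 0 < q := lt_trans one_pos hq
  have hp0 : 0 < p := by
    rw [hp]; exact div_pos (by linarith) (by linarith)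
  have hSJ : 0 ≤ ∑ e ∈ nbrEdges d x, |J e| ^ q :=
    Finset.sum_nonneg fun e _ => Real.rpow_nonneg (abs_nonneg _) _
  have hSξ : 0 ≤ ∑ y ∈ nbrs d x, |ξ y| ^ p :=
    Finset.sum_nonneg fun y _ => Real.rpow_nonneg (abs_nonneg _) _
  have hk1q : 0 ≤ k ^ (1 - q) := Real.rpow_nonneg hk.le _
  obtain ⟨A, hAdef⟩ : ∃ A : ℝ, A = k ^ (1 - q) * (∑ e ∈ nbrEdges d x, |J e| ^ q)
      + k / 2 * (∑ y ∈ nbrs d x, |ξ y| ^ p) := ⟨_, rfl⟩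
  have hA : 0 ≤ A := by
    rw [hAdef]
    exact add_nonneg (mul_nonneg hk1q hSJ) (mul_nonneg (by positivity) hSξ)
  have hdk : (0:ℝ) < 2 * d * k := by positivity
  set u0 : ↥({x} : Finset (Site d)) := ⟨x, Finset.mem_singleton_self x⟩ with hu0
  -- energy bound
  have hen : ∀ σ : (y : ↥({x} : Finset (Site d))) → ℝ,
      |energy d {x} J σ ξ| ≤ A + 2 * d * k * |σ u0| ^ p := by
    intro σ
    refine (energy_singleton_bound hq hp hk x J ξ σ).trans ?_
    have h0 : (0:ℝ) ≤ |σ u0| ^ p := Real.rpow_nonneg (abs_nonneg _) _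
    rw [hAdef]
    nlinarith
  -- measurability
  have hgluez : ∀ z : Site d,
      Measurable fun σ : (y : ↥({x} : Finset (Site d))) → ℝ => glue d {x} σ ξ z := by
    intro z
    by_cases h : z ∈ ({x} : Finset (Site d))
    · simpa [glue, h] using measurable_pi_apply (⟨z, h⟩ : ↥({x} : Finset (Site d)))
    · simpa [glue, h] using measurable_const
  have hglue : Measurable fun σ : (y : ↥({x} : Finset (Site d))) → ℝ => glue d {x} σ ξ :=
    measurable_pi_lambda _ fun z => hgluez z
  have hE : Measurable fun σ : (y : ↥({x} : Finset (Site d))) → ℝ => energy d {x} J σ ξ := by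
    apply Finset.measurable_sum
    intro e _
    exact (measurable_const.mul (hgluez e.1)).mul (hgluez (ept d e))
  have hg : Measurable fun σ : (y : ↥({x} : Finset (Site d))) → ℝ =>
      ENNReal.ofReal (Real.exp (energy d {x} J σ ξ)) :=
    ENNReal.measurable_ofReal.comp (Real.measurable_exp.comp hE)
  have hF : Measurable fun t : ℝ => ENNReal.ofReal (Real.exp (l * |t| ^ p)) := by fun_prop
  have hGp : Measurable fun t : ℝ => ENNReal.ofReal (Real.exp ((l + 2 * d * k) * |t| ^ p)) := by
    fun_prop
  have hGm : Measurable fun t : ℝ => ENNReal.ofReal (Real.exp (-(2 * d * k * |t| ^ p))) := by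
    fun_prop
  have hcomp1 : Measurable fun σ : (y : ↥({x} : Finset (Site d))) → ℝ =>
      ENNReal.ofReal (Real.exp (l * |glue d {x} σ ξ x| ^ p)) := by
    simp only [glue_singleton_self]
    exact hF.comp (measurable_pi_apply _)
  -- the measure-preserving identification of refMeas {x} with χ x
  have hmp := measurePreserving_piUnique (fun y : ↥({x} : Finset (Site d)) => χ y.1)
  have hdefault : (default : ↥({x} : Finset (Site d))) = u0 := Subsingleton.elim _ _
  have hred : ∀ (G : ℝ → ℝ≥0∞), Measurable G →
      ∫⁻ σ, G (σ u0) ∂(refMeas d χ {x}) = ∫⁻ v, G v ∂(χ x) := by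
    intro G hG
    have h1 : ∫⁻ σ, G (σ u0)
        ∂(Measure.pi fun y : ↥({x} : Finset (Site d)) => χ y.1) =
        ∫⁻ v, G v ∂(χ (default : ↥({x} : Finset (Site d))).1) := by
      rw [← hmp.lintegral_comp hG]
      refine lintegral_congr fun σ => ?_
      have h2 : (MeasurableEquiv.piUnique
          (fun _ : ↥({x} : Finset (Site d)) => ℝ)) σ = σ default := rfl
      rw [h2, hdefault]
    rw [refMeas, h1, hdefault]
  -- the numerator bound
  have pointwise_num : ∀ σ : (y : ↥({x} : Finset (Site d))) → ℝ,
      ENNReal.ofReal (Real.exp (energy d {x} J σ ξ)) *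
        ENNReal.ofReal (Real.exp (l * |σ u0| ^ p)) ≤
      ENNReal.ofReal (Real.exp A) *
        ENNReal.ofReal (Real.exp ((l + 2 * d * k) * |σ u0| ^ p)) := by
    intro σ
    rw [← ENNReal.ofReal_mul (Real.exp_nonneg _), ← ENNReal.ofReal_mul (Real.exp_nonneg _),
      ← Real.exp_add, ← Real.exp_add]
    refine ENNReal.ofReal_le_ofReal (Real.exp_le_exp.2 ?_)
    have h1 : energy d {x} J σ ξ ≤ A + 2 * d * k * |σ u0| ^ p :=
      (le_abs_self _).trans (hen σ)
    nlinarith [hen σ]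
  have hNle : ∫⁻ σ, ENNReal.ofReal (Real.exp (energy d {x} J σ ξ)) *
        ENNReal.ofReal (Real.exp (l * |σ u0| ^ p)) ∂(refMeas d χ {x}) ≤
      ENNReal.ofReal (Real.exp A) * Cplus d χ p (l + 2 * d * k) := by
    calc ∫⁻ σ, ENNReal.ofReal (Real.exp (energy d {x} J σ ξ)) *
          ENNReal.ofReal (Real.exp (l * |σ u0| ^ p)) ∂(refMeas d χ {x})
        ≤ ∫⁻ σ, ENNReal.ofReal (Real.exp A) *
            ENNReal.ofReal (Real.exp ((l + 2 * d * k) * |σ u0| ^ p)) ∂(refMeas d χ {x}) :=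
          lintegral_mono fun σ => pointwise_num σ
      _ = ENNReal.ofReal (Real.exp A) *
            ∫⁻ σ, ENNReal.ofReal (Real.exp ((l + 2 * d * k) * |σ u0| ^ p))
              ∂(refMeas d χ {x}) :=
          lintegral_const_mul _ (hGp.comp (measurable_pi_apply u0))
      _ = ENNReal.ofReal (Real.exp A) *
            ∫⁻ v, ENNReal.ofReal (Real.exp ((l + 2 * d * k) * |v| ^ p)) ∂(χ x) := by
          rw [hred _ hGp]
      _ ≤ ENNReal.ofReal (Real.exp A) * Cplus d χ p (l + 2 * d * k) := by
          gcongr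
          exact le_iSup (fun z : Site d =>
            ∫⁻ v, ENNReal.ofReal (Real.exp ((l + 2 * d * k) * |v| ^ p)) ∂(χ z)) x
  -- the partition function bound
  have hZge : ENNReal.ofReal (Real.exp (-A)) * Cminus d χ p (2 * d * k) ≤
      Zpart d χ {x} J ξ := by
    have pointwise_Z : ∀ σ : (y : ↥({x} : Finset (Site d))) → ℝ,
        ENNReal.ofReal (Real.exp (-A)) *
          ENNReal.ofReal (Real.exp (-(2 * d * k * |σ u0| ^ p))) ≤
        ENNReal.ofReal (Real.exp (energy d {x} J σ ξ)) := by
      intro σ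
      rw [← ENNReal.ofReal_mul (Real.exp_nonneg _), ← Real.exp_add]
      refine ENNReal.ofReal_le_ofReal (Real.exp_le_exp.2 ?_)
      have h1 : -(A + 2 * d * k * |σ u0| ^ p) ≤ energy d {x} J σ ξ :=
        neg_le_of_abs_le (hen σ)
      linarith
    calc ENNReal.ofReal (Real.exp (-A)) * Cminus d χ p (2 * d * k)
        ≤ ENNReal.ofReal (Real.exp (-A)) *
            ∫⁻ v, ENNReal.ofReal (Real.exp (-(2 * d * k * |v| ^ p))) ∂(χ x) := by
          gcongr
          exact iInf_le (fun z : Site d =>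
            ∫⁻ v, ENNReal.ofReal (Real.exp (-(2 * d * k * |v| ^ p))) ∂(χ z)) x
      _ = ENNReal.ofReal (Real.exp (-A)) *
            ∫⁻ σ, ENNReal.ofReal (Real.exp (-(2 * d * k * |σ u0| ^ p)))
              ∂(refMeas d χ {x}) := by rw [hred _ hGm]
      _ = ∫⁻ σ, ENNReal.ofReal (Real.exp (-A)) *
            ENNReal.ofReal (Real.exp (-(2 * d * k * |σ u0| ^ p))) ∂(refMeas d χ {x}) :=
          (lintegral_const_mul _ (hGm.comp (measurable_pi_apply u0))).symm
      _ ≤ ∫⁻ σ, ENNReal.ofReal (Real.exp (energy d {x} J σ ξ)) ∂(refMeas d χ {x}) :=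
          lintegral_mono fun σ => pointwise_Z σ
      _ = Zpart d χ {x} J ξ := rfl
  -- rewrite the LHS
  have hlhs : ∫⁻ σ, ENNReal.ofReal (Real.exp (l * |σ x| ^ p))
      ∂(gibbsKernel d χ ({x} : Finset (Site d)) J ξ) =
      (Zpart d χ {x} J ξ)⁻¹ *
        ∫⁻ σ, ENNReal.ofReal (Real.exp (energy d {x} J σ ξ)) *
          ENNReal.ofReal (Real.exp (l * |σ u0| ^ p)) ∂(refMeas d χ {x}) := by
    rw [gibbsKernel, lintegral_smul_measure,
      lintegral_map (f := fun σ : Config d => ENNReal.ofReal (Real.exp (l * |σ x| ^ p)))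
        (hF.comp (measurable_pi_apply x)) hglue,
      lintegral_withDensity_eq_lintegral_mul _ hg hcomp1]
    congr 1
    refine lintegral_congr fun σ => ?_
    simp only [Pi.mul_apply]
    rw [glue_singleton_self]
  -- constants
  have hCptop : Cplus d χ p (l + 2 * d * k) < ⊤ := hCp _ (by linarith)
  have hCp1 : 1 ≤ Cplus d χ p (l + 2 * d * k) := by
    have h1 : (1:ℝ≥0∞) ≤ ∫⁻ v, ENNReal.ofReal (Real.exp ((l + 2 * d * k) * |v| ^ p)) ∂(χ x) := by
      calc (1:ℝ≥0∞) = ∫⁻ _, 1 ∂(χ x) := by simp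
        _ ≤ _ := lintegral_mono fun v => ENNReal.one_le_ofReal.2
            (Real.one_le_exp
              (mul_nonneg (by linarith) (Real.rpow_nonneg (abs_nonneg _) _)))
    exact h1.trans (le_iSup (fun z : Site d =>
      ∫⁻ v, ENNReal.ofReal (Real.exp ((l + 2 * d * k) * |v| ^ p)) ∂(χ z)) x)
  have hCm0 : 0 < Cminus d χ p (2 * d * k) := hCm _ hdk
  have hCm1 : Cminus d χ p (2 * d * k) ≤ 1 := by
    refine (iInf_le (fun z : Site d =>
      ∫⁻ v, ENNReal.ofReal (Real.exp (-(2 * d * k * |v| ^ p))) ∂(χ z)) x).trans ?_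
    calc ∫⁻ v, ENNReal.ofReal (Real.exp (-(2 * d * k * |v| ^ p))) ∂(χ x)
        ≤ ∫⁻ _, 1 ∂(χ x) := lintegral_mono fun v => ENNReal.ofReal_le_one.2
          (Real.exp_le_one_iff.2
            (neg_nonpos.2 (mul_nonneg hdk.le (Real.rpow_nonneg (abs_nonneg _) _))))
      _ = 1 := by simp
  have hCmtop : Cminus d χ p (2 * d * k) ≠ ⊤ := (lt_of_le_of_lt hCm1 one_lt_top).ne
  have hCpR : 0 < (Cplus d χ p (l + 2 * d * k)).toReal :=
    ENNReal.toReal_pos (by intro h0; rw [h0] at hCp1; simp at hCp1) hCptop.ne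
  have hCmR : 0 < (Cminus d χ p (2 * d * k)).toReal :=
    ENNReal.toReal_pos hCm0.ne' hCmtop
  -- put everything together
  rw [hlhs]
  have hinv : (Zpart d χ {x} J ξ)⁻¹ ≤
      (ENNReal.ofReal (Real.exp (-A)) * Cminus d χ p (2 * d * k))⁻¹ :=
    ENNReal.inv_le_inv' hZge
  have hofRealne : ENNReal.ofReal (Real.exp (-A)) ≠ 0 := by
    simp [Real.exp_pos]
  have hmulinv : (ENNReal.ofReal (Real.exp (-A)) * Cminus d χ p (2 * d * k))⁻¹ =
      ENNReal.ofReal (Real.exp A) * (Cminus d χ p (2 * d * k))⁻¹ := by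
    rw [ENNReal.mul_inv (Or.inl hofRealne) (Or.inl ENNReal.ofReal_ne_top)]
    congr 1
    rw [Real.exp_neg, ENNReal.ofReal_inv_of_pos (Real.exp_pos A), inv_inv]
  have hgen : ∀ a b B : ℝ, 0 < a → 0 < b →
      Real.exp B * Real.exp B * (a * b⁻¹) =
        Real.exp (Real.log a - Real.log b + 2 * B) := by
    intro a b B ha hb
    rw [Real.exp_add, Real.exp_sub, Real.exp_log ha, Real.exp_log hb, ← Real.exp_add]
    field_simp
    ring
  calc (Zpart d χ {x} J ξ)⁻¹ *
        ∫⁻ σ, ENNReal.ofReal (Real.exp (energy d {x} J σ ξ)) *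
          ENNReal.ofReal (Real.exp (l * |σ u0| ^ p)) ∂(refMeas d χ {x})
      ≤ (ENNReal.ofReal (Real.exp A) * (Cminus d χ p (2 * d * k))⁻¹) *
          (ENNReal.ofReal (Real.exp A) * Cplus d χ p (l + 2 * d * k)) := by
        rw [← hmulinv]
        exact mul_le_mul' hinv hNle
    _ = (ENNReal.ofReal (Real.exp A) * ENNReal.ofReal (Real.exp A)) *
          (Cplus d χ p (l + 2 * d * k) * (Cminus d χ p (2 * d * k))⁻¹) := by
        ring
    _ = ENNReal.ofReal (Real.exp A * Real.exp A) *
          ENNReal.ofReal ((Cplus d χ p (l + 2 * d * k)).toReal *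
            ((Cminus d χ p (2 * d * k)).toReal)⁻¹) := by
        have h1 : Cplus d χ p (l + 2 * d * k) * (Cminus d χ p (2 * d * k))⁻¹ =
            ENNReal.ofReal ((Cplus d χ p (l + 2 * d * k)).toReal *
              ((Cminus d χ p (2 * d * k)).toReal)⁻¹) := by
          rw [ENNReal.ofReal_mul hCpR.le, ENNReal.ofReal_toReal hCptop.ne,
            ENNReal.ofReal_inv_of_pos hCmR, ENNReal.ofReal_toReal hCmtop]
        rw [h1, ENNReal.ofReal_mul (Real.exp_nonneg _)]
    _ = ENNReal.ofReal (Real.exp (Real.log (Cplus d χ p (l + 2 * d * k)).toReal -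
          Real.log (Cminus d χ p (2 * d * k)).toReal + 2 * A)) := by
        rw [← ENNReal.ofReal_mul (by positivity), hgen _ _ _ hCpR hCmR]
    _ ≤ ENNReal.ofReal (Real.exp
          ((Real.log (Cplus d χ p (l + 2 * d * k)).toReal -
              Real.log (Cminus d χ p (2 * d * k)).toReal)
            + 2 * k * ∑ y ∈ nbrs d x, |ξ y| ^ p
            + 2 * k ^ (1 - q) * ∑ e ∈ nbrEdges d x, |J e| ^ q)) := by
        refine ENNReal.ofReal_le_ofReal (Real.exp_le_exp.2 ?_)
        have hA2 : 2 * A = 2 * k ^ (1 - q) * (∑ e ∈ nbrEdges d x, |J e| ^ q)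
            + k * ∑ y ∈ nbrs d x, |ξ y| ^ p := by rw [hAdef]; ring
        nlinarith
end
end

section
/- (First GKS-type inequality for the averaged pressure) Let ν be a product probability measure on the coordinates (J_{xy})_{⟨x,y⟩∈E} with ν(𝒥_q) = 1, satisfying sup_{⟨x,y⟩∈E} ∫ |J_{xy}|^q ν(dJ) < ∞ and ∫ J_{xy} ν(dJ) = 0 for every edge. Fix a finite Δ ⊂ ℤ^d and an edge ⟨x̄,ȳ⟩ ∈ E with x̄, ȳ ∈ Δ, and let −H̄_Δ(σ_Δ|J,0) = −H_Δ(σ_Δ|J,0) − J_{x̄ȳ}σ(x̄)σ(ȳ) be the energy with the edge ⟨x̄,ȳ⟩ removed. Define, for λ ∈ ℝ, P_Δ(λ) = ∫_{𝒥_q} log( ∫_{ℝ^Δ} exp(λ J_{x̄ȳ} σ(x̄)σ(ȳ) − H̄_Δ(σ_Δ|J,0)) ∏_{x∈Δ} χ_x(dσ(x)) ) ν(dJ). Then P_Δ(1) ≥ P_Δ(0). -/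
open MeasureTheory ENNReal Filter Topology

noncomputable section

open Paper

/-- `P_Δ(λ)`: the disorder-averaged log-partition function with the coupling of the
distinguished edge scaled by `λ`. -/
def Pfun (d : ℕ) (χ : Site d → Measure ℝ) [∀ x, SigmaFinite (χ x)]
    (Δ : Finset (Site d)) (ebar : Edge d) (ν : Measure (Edge d → ℝ)) (lam : ℝ) : ℝ :=
  ∫ J, Real.log ((∫⁻ σ, ENNReal.ofReal (Real.exp
      (lam * (J ebar * glue d Δ σ 0 ebar.1 * glue d Δ σ 0 (ept d ebar))
        + (energy d Δ J σ 0 - J ebar * glue d Δ σ 0 ebar.1 * glue d Δ σ 0 (ept d ebar))))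
      ∂(refMeas d χ Δ)).toReal) ∂ν
namespace GKSaux

open Paper MeasureTheory ENNReal

variable (d : ℕ) (χ : Site d → Measure ℝ) (Δ : Finset (Site d)) (ebar : Edge d)

/-- the product of the two spins across edge `e` (zero boundary condition) -/
def uu (e : Edge d) (σ : (x : Δ) → ℝ) : ℝ :=
  glue d Δ σ 0 e.1 * glue d Δ σ 0 (ept d e)

/-- the relevant edges other than the distinguished one -/
def SE : Finset (Edge d) := (edgesIn d Δ).erase ebar

/-- the energy carried by the other edges -/
def Bf (r : {e // e ∈ SE d Δ ebar} → ℝ) (σ : (x : Δ) → ℝ) : ℝ :=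
  ∑ e ∈ (SE d Δ ebar).attach, r e * uu d Δ e.1 σ

/-- partition function with coupling `t` on the distinguished edge, `r` elsewhere -/
def Wf (t : ℝ) (r : {e // e ∈ SE d Δ ebar} → ℝ) : ℝ≥0∞ :=
  ∫⁻ σ, ENNReal.ofReal (Real.exp (t * uu d Δ ebar σ + Bf d Δ ebar r σ)) ∂(refMeas d χ Δ)

/-- its log -/
def Gf (z : ℝ × ({e // e ∈ SE d Δ ebar} → ℝ)) : ℝ :=
  Real.log (Wf d χ Δ ebar z.1 z.2).toReal

/-- the q-power weight of the couplings -/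
def Kf (q : ℝ) (t : ℝ) (r : {e // e ∈ SE d Δ ebar} → ℝ) : ℝ :=
  |t| ^ q + ∑ e ∈ (SE d Δ ebar).attach, |r e| ^ q

/-- the p-power weight of a spin configuration -/
def Ns (p : ℝ) (σ : (x : Δ) → ℝ) : ℝ := ∑ x ∈ Δ.attach, |σ x| ^ p

/-- a counting constant -/
def lP : ℝ := ((SE d Δ ebar).card : ℝ) + 1

/-- product of the exponential p-moments -/
def PP (p : ℝ) : ℝ := ∏ x ∈ Δ.attach, ∫ u, Real.exp (lP d Δ ebar * |u| ^ p) ∂(χ x.1)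

/-- product of the negative exponential p-moments -/
def MM (p : ℝ) : ℝ := ∏ x ∈ Δ.attach, ∫ u, Real.exp (-(lP d Δ ebar * |u| ^ p)) ∂(χ x.1)

lemma lP_pos : 0 < lP d Δ ebar := by unfold lP; positivity

lemma measurable_glue0 (z : Site d) : Measurable fun σ : (x : Δ) → ℝ => glue d Δ σ 0 z := by
  unfold glue
  by_cases h : z ∈ Δ
  · simpa [h] using measurable_pi_apply (⟨z, h⟩ : {x // x ∈ Δ})
  · simp only [h, dite_false]
    exact measurable_const

lemma measurable_uu (e : Edge d) : Measurable (uu d Δ e) :=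
  (measurable_glue0 d Δ e.1).mul (measurable_glue0 d Δ (ept d e))

lemma ebar_mem (h1 : ebar.1 ∈ Δ) : ebar ∈ edgesIn d Δ := by
  refine Finset.mem_biUnion.2 ⟨ebar.1, h1, ?_⟩
  unfold nbrEdges
  refine Finset.mem_union_left _ (Finset.mem_image.2 ⟨ebar.2, Finset.mem_univ _, ?_⟩)
  exact Prod.mk.eta

lemma energy_decomp (h1 : ebar.1 ∈ Δ) (J : Edge d → ℝ) (σ : (x : Δ) → ℝ) :
    energy d Δ J σ 0 = J ebar * uu d Δ ebar σ +
      Bf d Δ ebar (fun e => J e.1) σ := by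
  unfold energy Bf uu
  rw [Finset.sum_attach (SE d Δ ebar) (fun e => J e * (glue d Δ σ 0 e.1 * glue d Δ σ 0 (ept d e)))]
  rw [← Finset.add_sum_erase _ _ (ebar_mem d Δ ebar h1)]
  simp [SE, mul_assoc]

section Bounds

variable {q p : ℝ}

lemma hp_pos (hq : 1 < q) (hp : p = 2 * q / (q - 1)) : 0 < p := by
  rw [hp]; exact div_pos (by linarith) (by linarith)

lemma Ns_nonneg (σ : (x : Δ) → ℝ) : 0 ≤ Ns d Δ p σ :=
  Finset.sum_nonneg fun i _ => Real.rpow_nonneg (abs_nonneg _) _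

lemma glue_rpow_le (hp0 : 0 < p) (z : Site d) (σ : (x : Δ) → ℝ) :
    |glue d Δ σ 0 z| ^ p ≤ Ns d Δ p σ := by
  by_cases h : z ∈ Δ
  · have hmem : (⟨z, h⟩ : {x // x ∈ Δ}) ∈ Δ.attach := Finset.mem_attach _ _
    have := Finset.single_le_sum (f := fun x : {x // x ∈ Δ} => |σ x| ^ p)
      (fun i _ => Real.rpow_nonneg (abs_nonneg _) _) hmem
    simpa [glue, h, Ns] using this
  · have : glue d Δ σ 0 z = 0 := by simp [glue, h]
    rw [this]
    simpa [Real.zero_rpow (ne_of_gt hp0)] using Ns_nonneg d Δ σ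

lemma uu_young (hq : 1 < q) (hp : p = 2 * q / (q - 1)) (c : ℝ) (e : Edge d)
    (σ : (x : Δ) → ℝ) : |c * uu d Δ e σ| ≤ |c| ^ q + Ns d Δ p σ := by
  have hq1 : q - 1 ≠ 0 := sub_ne_zero.mpr (ne_of_gt hq)
  set q' := Real.conjExponent q with hq'def
  have hcq : q.HolderConjugate q' := Real.HolderConjugate.conjExponent hq
  set A := |glue d Δ σ 0 e.1| with hA
  set B := |glue d Δ σ 0 (ept d e)| with hB
  have hA0 : 0 ≤ A := abs_nonneg _
  have hB0 : 0 ≤ B := abs_nonneg _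
  have h1 : |c * uu d Δ e σ| = |c| * (A * B) := by
    rw [hA, hB, uu, abs_mul, abs_mul]
  have hyoung : |c| * (A * B) ≤ |c| ^ q / q + (A * B) ^ q' / q' :=
    Real.young_inequality_of_nonneg (abs_nonneg c) (mul_nonneg hA0 hB0) hcq
  have hcdiv : |c| ^ q / q ≤ |c| ^ q :=
    div_le_self (Real.rpow_nonneg (abs_nonneg c) q) (by linarith)
  have habdiv : (A * B) ^ q' / q' ≤ (A * B) ^ q' :=
    div_le_self (Real.rpow_nonneg (mul_nonneg hA0 hB0) q') hcq.symm.lt.le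
  have hsq : (A * B) ^ q' ≤ (A ^ p + B ^ p) / 2 := by
    have hmul : (A * B) ^ q' = A ^ q' * B ^ q' := Real.mul_rpow hA0 hB0
    have hA2 : (A ^ q') ^ 2 = A ^ p := by
      rw [← Real.rpow_natCast (A ^ q') 2, ← Real.rpow_mul hA0]
      congr 1
      rw [hq'def, Real.conjExponent, hp]
      field_simp
      ring
    have hB2 : (B ^ q') ^ 2 = B ^ p := by
      rw [← Real.rpow_natCast (B ^ q') 2, ← Real.rpow_mul hB0]
      congr 1
      rw [hq'def, Real.conjExponent, hp]
      field_simp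
      ring
    nlinarith [sq_nonneg (A ^ q' - B ^ q')]
  have hp0 : 0 < p := hp_pos hq hp
  have hAN : A ^ p ≤ Ns d Δ p σ := glue_rpow_le d Δ hp0 e.1 σ
  have hBN : B ^ p ≤ Ns d Δ p σ := glue_rpow_le d Δ hp0 (ept d e) σ
  rw [h1]
  calc |c| * (A * B) ≤ |c| ^ q / q + (A * B) ^ q' / q' := hyoung
    _ ≤ |c| ^ q + (A * B) ^ q' := add_le_add hcdiv habdiv
    _ ≤ |c| ^ q + (A ^ p + B ^ p) / 2 := by linarith
    _ ≤ |c| ^ q + Ns d Δ p σ := by linarith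

lemma expo_abs_le (hq : 1 < q) (hp : p = 2 * q / (q - 1)) (t : ℝ)
    (r : {e // e ∈ SE d Δ ebar} → ℝ) (σ : (x : Δ) → ℝ) :
    |t * uu d Δ ebar σ + Bf d Δ ebar r σ| ≤
      Kf d Δ ebar q t r + lP d Δ ebar * Ns d Δ p σ := by
  have h1 : |t * uu d Δ ebar σ| ≤ |t| ^ q + Ns d Δ p σ := uu_young d Δ hq hp t ebar σ
  have h2 : |Bf d Δ ebar r σ| ≤
      ∑ e ∈ (SE d Δ ebar).attach, (|r e| ^ q + Ns d Δ p σ) := by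
    refine (Finset.abs_sum_le_sum_abs _ _).trans (Finset.sum_le_sum fun e _ => ?_)
    exact uu_young d Δ hq hp (r e) e.1 σ
  rw [Finset.sum_add_distrib, Finset.sum_const, Finset.card_attach, nsmul_eq_mul] at h2
  calc |t * uu d Δ ebar σ + Bf d Δ ebar r σ|
      ≤ |t * uu d Δ ebar σ| + |Bf d Δ ebar r σ| := abs_add_le _ _
    _ ≤ Kf d Δ ebar q t r + lP d Δ ebar * Ns d Δ p σ := by
        unfold Kf lP; linarith

end Bounds

end GKSaux
namespace GKSaux

open Paper MeasureTheory ENNReal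

/-- Factorization of a product lintegral over a finite product measure. -/
lemma lintegral_pi_prod {ι : Type*} [DecidableEq ι] [Fintype ι] {α : ι → Type*}
    [∀ i, MeasurableSpace (α i)] (μ : ∀ i, Measure (α i)) [∀ i, SigmaFinite (μ i)]
    (g : ∀ i, α i → ℝ≥0∞) (hg : ∀ i, Measurable (g i)) (x₀ : ∀ i, α i) :
    ∫⁻ x, ∏ i, g i (x i) ∂Measure.pi μ = ∏ i, ∫⁻ u, g i u ∂μ i := by
  have key : ∀ s : Finset ι,
      (∫⋯∫⁻_s, (fun x => ∏ i ∈ s, g i (x i)) ∂μ) = fun _ => ∏ i ∈ s, ∫⁻ u, g i u ∂μ i := by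
    intro s
    induction s using Finset.induction_on with
    | empty => funext x; simp
    | @insert i s hi ih =>
      have hfm : Measurable fun x : ∀ i, α i => ∏ j ∈ insert i s, g j (x j) :=
        Finset.measurable_prod _ fun j _ => (hg j).comp (measurable_pi_apply j)
      rw [lmarginal_insert' _ hfm hi]
      have h1 : (fun x => ∫⁻ xᵢ, (fun y => ∏ j ∈ insert i s, g j (y j))
          (Function.update x i xᵢ) ∂μ i)
          = fun x => (∏ j ∈ s, g j (x j)) * ∫⁻ u, g i u ∂μ i := by
        funext x
        have h2 : ∀ u, ∏ j ∈ insert i s, g j (Function.update x i u j)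
            = (∏ j ∈ s, g j (x j)) * g i u := by
          intro u
          rw [Finset.prod_insert hi, Function.update_self, mul_comm]
          congr 1
          exact Finset.prod_congr rfl fun j hj => by
            rw [Function.update_of_ne (ne_of_mem_of_not_mem hj hi)]
        simp only [h2]
        exact lintegral_const_mul _ (hg i)
      rw [h1]
      funext x
      have hm2 : Measurable fun x : ∀ i, α i => ∏ j ∈ s, g j (x j) :=
        Finset.measurable_prod _ fun j _ => (hg j).comp (measurable_pi_apply j)
      have : (∫⋯∫⁻_s, (fun x => (∏ j ∈ s, g j (x j)) * ∫⁻ u, g i u ∂μ i) ∂μ) x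
          = (∫⋯∫⁻_s, (fun x => ∏ j ∈ s, g j (x j)) ∂μ) x * ∫⁻ u, g i u ∂μ i := by
        unfold lmarginal
        exact lintegral_mul_const _ (hm2.comp measurable_updateFinset)
      rw [this, ih, Finset.prod_insert hi, mul_comm]
  calc ∫⁻ x, ∏ i, g i (x i) ∂Measure.pi μ
      = (∫⋯∫⁻_Finset.univ, (fun x => ∏ i, g i (x i)) ∂μ) x₀ :=
        lintegral_eq_lmarginal_univ (μ := μ) x₀
    _ = ∏ i, ∫⁻ u, g i u ∂μ i := by rw [key Finset.univ]

variable (d : ℕ) (χ : Site d → Measure ℝ) (Δ : Finset (Site d)) (ebar : Edge d)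

section Moments

variable [∀ x, IsProbabilityMeasure (χ x)] (p : ℝ)

lemma measurable_abs_rpow (l p : ℝ) (hp0 : 0 ≤ p) : Measurable fun u : ℝ => l * |u| ^ p :=
  measurable_const.mul ((Real.continuous_rpow_const hp0).measurable.comp measurable_abs)

/-- `∏_{x∈Δ} ∫ e^{l|u|^p} dχ_x` -/
def PPe : ℝ≥0∞ :=
  ∏ x ∈ Δ.attach, ∫⁻ u, ENNReal.ofReal (Real.exp (lP d Δ ebar * |u| ^ p)) ∂(χ x.1)

/-- `∏_{x∈Δ} ∫ e^{-l|u|^p} dχ_x` -/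
def MMe : ℝ≥0∞ :=
  ∏ x ∈ Δ.attach, ∫⁻ u, ENNReal.ofReal (Real.exp (-(lP d Δ ebar * |u| ^ p))) ∂(χ x.1)

lemma one_le_PPe : 1 ≤ PPe d χ Δ ebar p := by
  refine Finset.one_le_prod' fun x _ => ?_
  have h1 : (1 : ℝ≥0∞) = ∫⁻ _, (1 : ℝ≥0∞) ∂(χ x.1) := by simp
  rw [h1]
  refine lintegral_mono fun u => ?_
  rw [show (1 : ℝ≥0∞) = ENNReal.ofReal 1 by simp]
  exact ENNReal.ofReal_le_ofReal (Real.one_le_exp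
    (mul_nonneg (lP_pos d Δ ebar).le (Real.rpow_nonneg (abs_nonneg _) _)))

lemma PPe_lt_top (hC : Cplus d χ p (lP d Δ ebar) < ⊤) : PPe d χ Δ ebar p < ⊤ := by
  refine ENNReal.prod_lt_top fun x _ => ?_
  calc ∫⁻ u, ENNReal.ofReal (Real.exp (lP d Δ ebar * |u| ^ p)) ∂(χ x.1)
      ≤ Cplus d χ p (lP d Δ ebar) := le_iSup (fun y : Site d =>
        ∫⁻ u, ENNReal.ofReal (Real.exp (lP d Δ ebar * |u| ^ p)) ∂(χ y)) x.1
    _ < ⊤ := hC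

lemma MMe_pos (hp0 : 0 ≤ p) : 0 < MMe d χ Δ ebar p := by
  rw [pos_iff_ne_zero]
  refine Finset.prod_ne_zero_iff.2 fun x _ => ?_
  have hm : Measurable fun u : ℝ => ENNReal.ofReal (Real.exp (-(lP d Δ ebar * |u| ^ p))) := by
    exact ENNReal.measurable_ofReal.comp (Real.measurable_exp.comp
      (measurable_abs_rpow (lP d Δ ebar) p hp0).neg)
  rw [← pos_iff_ne_zero, lintegral_pos_iff_support hm]
  have hsupp : Function.support (fun u : ℝ =>
      ENNReal.ofReal (Real.exp (-(lP d Δ ebar * |u| ^ p)))) = Set.univ := by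
    ext u
    simp [Function.support, ENNReal.ofReal_pos.2 (Real.exp_pos _), Real.exp_pos]
  rw [hsupp]
  simp

lemma MMe_le_one : MMe d χ Δ ebar p ≤ 1 := by
  refine Finset.prod_le_one (fun x _ => zero_le) fun x _ => ?_
  have h1 : (1 : ℝ≥0∞) = ∫⁻ _, (1 : ℝ≥0∞) ∂(χ x.1) := by simp
  rw [h1]
  refine lintegral_mono fun u => ?_
  rw [show (1 : ℝ≥0∞) = ENNReal.ofReal 1 by simp]
  exact ENNReal.ofReal_le_ofReal (Real.exp_le_one_iff.2 (neg_nonpos.2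
    (mul_nonneg (lP_pos d Δ ebar).le (Real.rpow_nonneg (abs_nonneg _) _))))

/-- factorization over the reference measure -/
lemma lint_prod_eq (g : {x // x ∈ Δ} → ℝ → ℝ≥0∞) (hg : ∀ x, Measurable (g x)) :
    ∫⁻ σ, ∏ x ∈ Δ.attach, g x (σ x) ∂(refMeas d χ Δ)
      = ∏ x ∈ Δ.attach, ∫⁻ u, g x u ∂(χ x.1) := by
  classical
  rw [← Finset.univ_eq_attach]
  exact lintegral_pi_prod (fun x : {x // x ∈ Δ} => χ x.1) g hg (fun _ => 0)

end Moments

end GKSaux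
namespace GKSaux

open Paper MeasureTheory ENNReal

variable (d : ℕ) (χ : Site d → Measure ℝ) (Δ : Finset (Site d)) (ebar : Edge d)
variable [∀ x, IsProbabilityMeasure (χ x)]
variable {q p : ℝ}

lemma measurable_expo (t : ℝ) (r : {e // e ∈ SE d Δ ebar} → ℝ) :
    Measurable fun σ : (x : Δ) → ℝ => t * uu d Δ ebar σ + Bf d Δ ebar r σ := by
  refine (measurable_const.mul (measurable_uu d Δ ebar)).add ?_
  unfold Bf
  exact Finset.measurable_sum _ fun e _ => measurable_const.mul (measurable_uu d Δ e.1)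

lemma Wf_le (hq : 1 < q) (hp : p = 2 * q / (q - 1)) (t : ℝ)
    (r : {e // e ∈ SE d Δ ebar} → ℝ) :
    Wf d χ Δ ebar t r ≤
      ENNReal.ofReal (Real.exp (Kf d Δ ebar q t r)) * PPe d χ Δ ebar p := by
  have hp0 : 0 ≤ p := (hp_pos hq hp).le
  have hprodm : Measurable fun σ : (x : Δ) → ℝ =>
      ∏ x ∈ Δ.attach, ENNReal.ofReal (Real.exp (lP d Δ ebar * |σ x| ^ p)) :=
    Finset.measurable_prod _ fun x _ => ENNReal.measurable_ofReal.comp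
      (Real.measurable_exp.comp
        ((measurable_abs_rpow (lP d Δ ebar) p hp0).comp (measurable_pi_apply x)))
  calc Wf d χ Δ ebar t r
      ≤ ∫⁻ σ, ENNReal.ofReal (Real.exp (Kf d Δ ebar q t r)) *
          ∏ x ∈ Δ.attach, ENNReal.ofReal (Real.exp (lP d Δ ebar * |σ x| ^ p))
          ∂(refMeas d χ Δ) := by
        refine lintegral_mono fun σ => ?_
        have h1 : t * uu d Δ ebar σ + Bf d Δ ebar r σ ≤
            Kf d Δ ebar q t r + lP d Δ ebar * Ns d Δ p σ :=
          (le_abs_self _).trans (expo_abs_le d Δ ebar hq hp t r σ)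
        have h2 : Real.exp (t * uu d Δ ebar σ + Bf d Δ ebar r σ) ≤
            Real.exp (Kf d Δ ebar q t r) *
              ∏ x ∈ Δ.attach, Real.exp (lP d Δ ebar * |σ x| ^ p) := by
          rw [← Real.exp_sum, ← Real.exp_add]
          refine Real.exp_le_exp.2 ?_
          rw [show ∑ x ∈ Δ.attach, lP d Δ ebar * |σ x| ^ p
              = lP d Δ ebar * Ns d Δ p σ by rw [Ns, Finset.mul_sum]]
          exact h1
        calc ENNReal.ofReal (Real.exp (t * uu d Δ ebar σ + Bf d Δ ebar r σ))
            ≤ ENNReal.ofReal (Real.exp (Kf d Δ ebar q t r) *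
              ∏ x ∈ Δ.attach, Real.exp (lP d Δ ebar * |σ x| ^ p)) :=
              ENNReal.ofReal_le_ofReal h2
          _ = ENNReal.ofReal (Real.exp (Kf d Δ ebar q t r)) *
              ∏ x ∈ Δ.attach, ENNReal.ofReal (Real.exp (lP d Δ ebar * |σ x| ^ p)) := by
              rw [ENNReal.ofReal_mul (Real.exp_nonneg _),
                ENNReal.ofReal_prod_of_nonneg fun i _ => Real.exp_nonneg _]
    _ = ENNReal.ofReal (Real.exp (Kf d Δ ebar q t r)) *
          ∫⁻ σ, ∏ x ∈ Δ.attach, ENNReal.ofReal (Real.exp (lP d Δ ebar * |σ x| ^ p))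
          ∂(refMeas d χ Δ) := lintegral_const_mul _ hprodm
    _ = ENNReal.ofReal (Real.exp (Kf d Δ ebar q t r)) * PPe d χ Δ ebar p := by
        rw [lint_prod_eq d χ Δ (fun x u => ENNReal.ofReal
          (Real.exp (lP d Δ ebar * |u| ^ p))) (fun x => ENNReal.measurable_ofReal.comp
          (Real.measurable_exp.comp (measurable_abs_rpow (lP d Δ ebar) p hp0)))]
        rfl

lemma Wf_ge (hq : 1 < q) (hp : p = 2 * q / (q - 1)) (t : ℝ)
    (r : {e // e ∈ SE d Δ ebar} → ℝ) :
    ENNReal.ofReal (Real.exp (-Kf d Δ ebar q t r)) * MMe d χ Δ ebar p ≤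
      Wf d χ Δ ebar t r := by
  have hp0 : 0 ≤ p := (hp_pos hq hp).le
  have hprodm : Measurable fun σ : (x : Δ) → ℝ =>
      ∏ x ∈ Δ.attach, ENNReal.ofReal (Real.exp (-(lP d Δ ebar * |σ x| ^ p))) :=
    Finset.measurable_prod _ fun x _ => ENNReal.measurable_ofReal.comp
      (Real.measurable_exp.comp
        (((measurable_abs_rpow (lP d Δ ebar) p hp0).comp (measurable_pi_apply x)).neg))
  calc ENNReal.ofReal (Real.exp (-Kf d Δ ebar q t r)) * MMe d χ Δ ebar p
      = ENNReal.ofReal (Real.exp (-Kf d Δ ebar q t r)) *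
          ∫⁻ σ, ∏ x ∈ Δ.attach, ENNReal.ofReal (Real.exp (-(lP d Δ ebar * |σ x| ^ p)))
          ∂(refMeas d χ Δ) := by
        rw [lint_prod_eq d χ Δ (fun x u => ENNReal.ofReal
          (Real.exp (-(lP d Δ ebar * |u| ^ p)))) (fun x => ENNReal.measurable_ofReal.comp
          (Real.measurable_exp.comp ((measurable_abs_rpow (lP d Δ ebar) p hp0).neg)))]
        rfl
    _ = ∫⁻ σ, ENNReal.ofReal (Real.exp (-Kf d Δ ebar q t r)) *
          ∏ x ∈ Δ.attach, ENNReal.ofReal (Real.exp (-(lP d Δ ebar * |σ x| ^ p)))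
          ∂(refMeas d χ Δ) := (lintegral_const_mul _ hprodm).symm
    _ ≤ Wf d χ Δ ebar t r := by
        refine lintegral_mono fun σ => ?_
        have h1 : -(Kf d Δ ebar q t r + lP d Δ ebar * Ns d Δ p σ) ≤
            t * uu d Δ ebar σ + Bf d Δ ebar r σ := by
          have := expo_abs_le d Δ ebar hq hp t r σ
          have h2 := neg_abs_le (t * uu d Δ ebar σ + Bf d Δ ebar r σ)
          linarith
        have h2 : Real.exp (-Kf d Δ ebar q t r) *
            ∏ x ∈ Δ.attach, Real.exp (-(lP d Δ ebar * |σ x| ^ p)) ≤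
            Real.exp (t * uu d Δ ebar σ + Bf d Δ ebar r σ) := by
          rw [← Real.exp_sum, ← Real.exp_add]
          refine Real.exp_le_exp.2 ?_
          rw [show ∑ x ∈ Δ.attach, -(lP d Δ ebar * |σ x| ^ p)
              = -(lP d Δ ebar * Ns d Δ p σ) by rw [Ns, Finset.mul_sum, Finset.sum_neg_distrib]]
          linarith
        calc ENNReal.ofReal (Real.exp (-Kf d Δ ebar q t r)) *
            ∏ x ∈ Δ.attach, ENNReal.ofReal (Real.exp (-(lP d Δ ebar * |σ x| ^ p)))
            = ENNReal.ofReal (Real.exp (-Kf d Δ ebar q t r) *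
              ∏ x ∈ Δ.attach, Real.exp (-(lP d Δ ebar * |σ x| ^ p))) := by
              rw [ENNReal.ofReal_mul (Real.exp_nonneg _),
                ENNReal.ofReal_prod_of_nonneg fun i _ => Real.exp_nonneg _]
          _ ≤ ENNReal.ofReal (Real.exp (t * uu d Δ ebar σ + Bf d Δ ebar r σ)) :=
              ENNReal.ofReal_le_ofReal h2

lemma Wf_ne_top (hq : 1 < q) (hp : p = 2 * q / (q - 1))
    (hC : Cplus d χ p (lP d Δ ebar) < ⊤) (t : ℝ) (r : {e // e ∈ SE d Δ ebar} → ℝ) :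
    Wf d χ Δ ebar t r ≠ ⊤ :=
  ((Wf_le d χ Δ ebar hq hp t r).trans_lt
    (ENNReal.mul_lt_top ENNReal.ofReal_lt_top (PPe_lt_top d χ Δ ebar p hC))).ne

lemma Wf_pos (hq : 1 < q) (hp : p = 2 * q / (q - 1)) (t : ℝ)
    (r : {e // e ∈ SE d Δ ebar} → ℝ) : 0 < Wf d χ Δ ebar t r :=
  lt_of_lt_of_le (ENNReal.mul_pos (ENNReal.ofReal_pos.2 (Real.exp_pos _)).ne'
    (MMe_pos d χ Δ ebar p (hp_pos hq hp).le).ne') (Wf_ge d χ Δ ebar hq hp t r)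

/-- the constant in the uniform bound on `|log Z|` -/
def C0 (p : ℝ) : ℝ :=
  Real.log (PPe d χ Δ ebar p).toReal - Real.log (MMe d χ Δ ebar p).toReal

lemma Gf_abs_le (hq : 1 < q) (hp : p = 2 * q / (q - 1))
    (hC : Cplus d χ p (lP d Δ ebar) < ⊤) (t : ℝ) (r : {e // e ∈ SE d Δ ebar} → ℝ) :
    |Gf d χ Δ ebar (t, r)| ≤ Kf d Δ ebar q t r + C0 d χ Δ ebar p := by
  have hWt : Wf d χ Δ ebar t r ≠ ⊤ := Wf_ne_top d χ Δ ebar hq hp hC t r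
  have hW0 : Wf d χ Δ ebar t r ≠ 0 := (Wf_pos d χ Δ ebar hq hp t r).ne'
  have hWpos : 0 < (Wf d χ Δ ebar t r).toReal := ENNReal.toReal_pos hW0 hWt
  have hPt : PPe d χ Δ ebar p ≠ ⊤ := (PPe_lt_top d χ Δ ebar p hC).ne
  have hPr : 1 ≤ (PPe d χ Δ ebar p).toReal := by
    have := ENNReal.toReal_mono hPt (one_le_PPe d χ Δ ebar p)
    simpa using this
  have hMt : MMe d χ Δ ebar p ≠ ⊤ := (lt_of_le_of_lt (MMe_le_one d χ Δ ebar p)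
    ENNReal.one_lt_top).ne
  have hMr : 0 < (MMe d χ Δ ebar p).toReal :=
    ENNReal.toReal_pos (MMe_pos d χ Δ ebar p (hp_pos hq hp).le).ne' hMt
  have hMr1 : (MMe d χ Δ ebar p).toReal ≤ 1 := by
    have := ENNReal.toReal_mono ENNReal.one_ne_top (MMe_le_one d χ Δ ebar p)
    simpa using this
  have hub : (Wf d χ Δ ebar t r).toReal ≤
      Real.exp (Kf d Δ ebar q t r) * (PPe d χ Δ ebar p).toReal := by
    have := ENNReal.toReal_mono (ENNReal.mul_ne_top ENNReal.ofReal_ne_top hPt)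
      (Wf_le d χ Δ ebar hq hp t r)
    rwa [ENNReal.toReal_mul, ENNReal.toReal_ofReal (Real.exp_nonneg _)] at this
  have hlb : Real.exp (-Kf d Δ ebar q t r) * (MMe d χ Δ ebar p).toReal ≤
      (Wf d χ Δ ebar t r).toReal := by
    have := ENNReal.toReal_mono hWt (Wf_ge d χ Δ ebar hq hp t r)
    rwa [ENNReal.toReal_mul, ENNReal.toReal_ofReal (Real.exp_nonneg _)] at this
  have hlogu : Real.log (Wf d χ Δ ebar t r).toReal ≤
      Kf d Δ ebar q t r + Real.log (PPe d χ Δ ebar p).toReal := by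
    have h1 := (Real.log_le_log_iff hWpos (by positivity)).2 hub
    rwa [Real.log_mul (Real.exp_ne_zero _) (by positivity), Real.log_exp] at h1
  have hlogl : -Kf d Δ ebar q t r + Real.log (MMe d χ Δ ebar p).toReal ≤
      Real.log (Wf d χ Δ ebar t r).toReal := by
    have h1 := (Real.log_le_log_iff (by positivity) hWpos).2 hlb
    rwa [Real.log_mul (Real.exp_ne_zero _) (ne_of_gt hMr), Real.log_exp] at h1
  have hlogP : 0 ≤ Real.log (PPe d χ Δ ebar p).toReal := Real.log_nonneg hPr
  have hlogM : Real.log (MMe d χ Δ ebar p).toReal ≤ 0 := Real.log_nonpos hMr.le hMr1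
  rw [abs_le]
  constructor
  · unfold C0; unfold Gf; dsimp only; linarith
  · unfold C0; unfold Gf; dsimp only; linarith

end GKSaux
namespace GKSaux

open Paper MeasureTheory ENNReal

variable (d : ℕ) (χ : Site d → Measure ℝ) (Δ : Finset (Site d)) (ebar : Edge d)
variable [∀ x, IsProbabilityMeasure (χ x)]
variable {q p : ℝ}

lemma measurable_Gf : Measurable (Gf d χ Δ ebar) := by
  haveI : SFinite (refMeas d χ Δ) :=
    inferInstanceAs (SFinite (Measure.pi fun x : {x // x ∈ Δ} => χ x.1))
  have hmint : Measurable fun z : (ℝ × ({e // e ∈ SE d Δ ebar} → ℝ)) × ((x : Δ) → ℝ) =>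
      ENNReal.ofReal (Real.exp (z.1.1 * uu d Δ ebar z.2 + Bf d Δ ebar z.1.2 z.2)) := by
    refine ENNReal.measurable_ofReal.comp (Real.measurable_exp.comp (Measurable.add ?_ ?_))
    · exact measurable_fst.fst.mul ((measurable_uu d Δ ebar).comp measurable_snd)
    · unfold Bf
      exact Finset.measurable_sum _ fun e _ =>
        ((measurable_pi_apply e).comp measurable_fst.snd).mul
          ((measurable_uu d Δ e.1).comp measurable_snd)
  have hW : Measurable fun z : ℝ × ({e // e ∈ SE d Δ ebar} → ℝ) =>
      Wf d χ Δ ebar z.1 z.2 := Measurable.lintegral_prod_right' hmint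
  exact Real.measurable_log.comp hW.ennreal_toReal

lemma Gf_convex (hq : 1 < q) (hp : p = 2 * q / (q - 1))
    (hC : Cplus d χ p (lP d Δ ebar) < ⊤) (r : {e // e ∈ SE d Δ ebar} → ℝ) :
    ConvexOn ℝ Set.univ fun t => Gf d χ Δ ebar (t, r) := by
  refine ⟨convex_univ, fun t₁ _ t₂ _ a b ha hb hab => ?_⟩
  rcases eq_or_lt_of_le ha with ha0 | ha
  · have hb1 : b = 1 := by linarith
    simp [← ha0, hb1]
  rcases eq_or_lt_of_le hb with hb0 | hb
  · have ha1 : a = 1 := by linarith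
    simp [← hb0, ha1]
  have ha1 : a < 1 := by linarith
  have hconj : (1 / a).HolderConjugate (1 / b) := by
    rw [Real.holderConjugate_iff]
    constructor
    · rw [lt_div_iff₀ ha]; linarith
    · rw [one_div, one_div, inv_inv, inv_inv]; exact hab
  set f := fun σ : (x : Δ) → ℝ =>
    ENNReal.ofReal (Real.exp (a * (t₁ * uu d Δ ebar σ + Bf d Δ ebar r σ))) with hf
  set g := fun σ : (x : Δ) → ℝ =>
    ENNReal.ofReal (Real.exp (b * (t₂ * uu d Δ ebar σ + Bf d Δ ebar r σ))) with hg
  have hfm : Measurable f := ENNReal.measurable_ofReal.comp (Real.measurable_exp.comp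
    (measurable_const.mul (measurable_expo d Δ ebar t₁ r)))
  have hgm : Measurable g := ENNReal.measurable_ofReal.comp (Real.measurable_exp.comp
    (measurable_const.mul (measurable_expo d Δ ebar t₂ r)))
  have hholder := ENNReal.lintegral_mul_le_Lp_mul_Lq (refMeas d χ Δ) hconj
    hfm.aemeasurable hgm.aemeasurable
  have hfg : ∀ σ, (f * g) σ = ENNReal.ofReal
      (Real.exp ((a • t₁ + b • t₂) * uu d Δ ebar σ + Bf d Δ ebar r σ)) := by
    intro σ
    rw [Pi.mul_apply, hf, hg]
    dsimp only
    rw [← ENNReal.ofReal_mul (Real.exp_nonneg _), ← Real.exp_add]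
    congr 1
    have : a • t₁ + b • t₂ = a * t₁ + b * t₂ := rfl
    rw [this]
    congr 1
    linear_combination (Bf d Δ ebar r σ) * hab
  have hfpow : ∀ σ, f σ ^ (1 / a) =
      ENNReal.ofReal (Real.exp (t₁ * uu d Δ ebar σ + Bf d Δ ebar r σ)) := by
    intro σ
    rw [hf]
    dsimp only
    rw [ENNReal.ofReal_rpow_of_pos (Real.exp_pos _), ← Real.exp_mul]
    congr 2
    field_simp
  have hgpow : ∀ σ, g σ ^ (1 / b) =
      ENNReal.ofReal (Real.exp (t₂ * uu d Δ ebar σ + Bf d Δ ebar r σ)) := by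
    intro σ
    rw [hg]
    dsimp only
    rw [ENNReal.ofReal_rpow_of_pos (Real.exp_pos _), ← Real.exp_mul]
    congr 2
    field_simp
  have hkey : Wf d χ Δ ebar (a • t₁ + b • t₂) r ≤
      (Wf d χ Δ ebar t₁ r) ^ a * (Wf d χ Δ ebar t₂ r) ^ b := by
    have h1 : ∫⁻ σ, (f * g) σ ∂(refMeas d χ Δ) = Wf d χ Δ ebar (a • t₁ + b • t₂) r := by
      unfold Wf
      exact lintegral_congr fun σ => hfg σ
    have h2 : ∫⁻ σ, f σ ^ (1 / a) ∂(refMeas d χ Δ) = Wf d χ Δ ebar t₁ r := by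
      unfold Wf
      exact lintegral_congr fun σ => hfpow σ
    have h3 : ∫⁻ σ, g σ ^ (1 / b) ∂(refMeas d χ Δ) = Wf d χ Δ ebar t₂ r := by
      unfold Wf
      exact lintegral_congr fun σ => hgpow σ
    rw [h1, h2, h3] at hholder
    rwa [one_div_one_div, one_div_one_div] at hholder
  -- pass to logs
  set X := Wf d χ Δ ebar t₁ r with hX
  set Y := Wf d χ Δ ebar t₂ r with hY
  have hXt : X ≠ ⊤ := Wf_ne_top d χ Δ ebar hq hp hC t₁ r
  have hYt : Y ≠ ⊤ := Wf_ne_top d χ Δ ebar hq hp hC t₂ r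
  have hXr : 0 < X.toReal := ENNReal.toReal_pos (Wf_pos d χ Δ ebar hq hp t₁ r).ne' hXt
  have hYr : 0 < Y.toReal := ENNReal.toReal_pos (Wf_pos d χ Δ ebar hq hp t₂ r).ne' hYt
  have hmidpos : 0 < (Wf d χ Δ ebar (a • t₁ + b • t₂) r).toReal :=
    ENNReal.toReal_pos (Wf_pos d χ Δ ebar hq hp _ r).ne'
      (Wf_ne_top d χ Δ ebar hq hp hC _ r)
  have hRt : X ^ a * Y ^ b ≠ ⊤ := ENNReal.mul_ne_top
    (ENNReal.rpow_ne_top_of_nonneg ha.le hXt) (ENNReal.rpow_ne_top_of_nonneg hb.le hYt)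
  have htr : (Wf d χ Δ ebar (a • t₁ + b • t₂) r).toReal ≤ X.toReal ^ a * Y.toReal ^ b := by
    have := ENNReal.toReal_mono hRt hkey
    rw [ENNReal.toReal_mul] at this
    rw [← ENNReal.toReal_rpow, ← ENNReal.toReal_rpow] at this
    exact this
  have hlog := (Real.log_le_log_iff hmidpos (by positivity)).2 htr
  rw [Real.log_mul (by positivity) (by positivity), Real.log_rpow hXr,
    Real.log_rpow hYr] at hlog
  exact hlog

end GKSaux
open GKSaux

set_option maxHeartbeats 1000000 in
set_option synthInstance.maxHeartbeats 100000 in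

/-- The first GKS-type inequality for the averaged pressure: `P_Δ(1) ≥ P_Δ(0)`. -/
theorem gks_type_inequality (d : ℕ) (hd : 0 < d)
    (w : Site d → ℝ) (hw_pos : ∀ x, 0 < w x) (hw_one : ∀ x, w x ≤ 1) (hw_sum : Summable w)
    (w₀ : ℝ) (hw₀ : 0 < w₀) (hw_nb : ∀ x : Site d, ∀ y ∈ nbrs d x, w x ≤ w₀ * w y)
    (q p : ℝ) (hq : 1 < q) (hp : p = 2 * q / (q - 1))
    (χ : Site d → Measure ℝ) [∀ x, IsProbabilityMeasure (χ x)]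
    (hCp : ∀ l : ℝ, 0 < l → Cplus d χ p l < ⊤)
    (hCm : ∀ l : ℝ, 0 < l → 0 < Cminus d χ p l)
    (ν : Measure (Edge d → ℝ)) [IsProbabilityMeasure ν]
    (hprod : ProbabilityTheory.iIndepFun (m := fun _ : Edge d => (inferInstance : MeasurableSpace ℝ))
      (fun e (J : Edge d → ℝ) => J e) ν)
    (hν1 : ν (JqSet d w q) = 1)
    (ha : ∃ a : ℝ, ∀ e : Edge d, ∫⁻ J, ENNReal.ofReal (|J e| ^ q) ∂ν ≤ ENNReal.ofReal a)
    (hint : ∀ e : Edge d, Integrable (fun J : Edge d → ℝ => J e) ν)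
    (hmean : ∀ e : Edge d, ∫ J, J e ∂ν = 0)
    (Δ : Finset (Site d)) (ebar : Edge d) (h1 : ebar.1 ∈ Δ) (h2 : ept d ebar ∈ Δ) :
    Pfun d χ Δ ebar ν 0 ≤ Pfun d χ Δ ebar ν 1 := by
  have hq0 : (0 : ℝ) ≤ q := le_of_lt (lt_trans zero_lt_one hq)
  have hCp' : Cplus d χ p (lP d Δ ebar) < ⊤ := hCp _ (lP_pos d Δ ebar)
  set X : (Edge d → ℝ) → ℝ := fun J => J ebar with hXdef
  set Y : (Edge d → ℝ) → ({e // e ∈ SE d Δ ebar} → ℝ) := fun J e => J e.1 with hYdef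
  have hXm : Measurable X := measurable_pi_apply ebar
  have hYm : Measurable Y := measurable_pi_lambda _ fun e => measurable_pi_apply e.1
  set G := Gf d χ Δ ebar with hGdef
  have hGm : Measurable G := measurable_Gf d χ Δ ebar
  -- independence of the distinguished coupling from the others
  have hdisj : Disjoint ({ebar} : Finset (Edge d)) (SE d Δ ebar) := by
    rw [Finset.disjoint_singleton_left]
    exact Finset.notMem_erase _ _
  have hindep0 := hprod.indepFun_finset {ebar} (SE d Δ ebar) hdisj
    (fun i => measurable_pi_apply i)
  have hindep : ProbabilityTheory.IndepFun X Y ν := by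
    have hcomp := hindep0.comp
      (φ := fun v : ({e // e ∈ ({ebar} : Finset (Edge d))} → ℝ) =>
        v ⟨ebar, Finset.mem_singleton_self ebar⟩) (ψ := id)
      (measurable_pi_apply _ : Measurable fun v : ({e // e ∈ ({ebar} : Finset (Edge d))} → ℝ) =>
        v ⟨ebar, Finset.mem_singleton_self ebar⟩) measurable_id
    exact hcomp
  set μX : Measure ℝ := ν.map X with hμX
  set μY : Measure ({e // e ∈ SE d Δ ebar} → ℝ) := ν.map Y with hμY
  haveI : IsProbabilityMeasure μX := Measure.isProbabilityMeasure_map hXm.aemeasurable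
  haveI : IsProbabilityMeasure μY := Measure.isProbabilityMeasure_map hYm.aemeasurable
  have hmap : ν.map (fun J => (X J, Y J)) = μX.prod μY :=
    (ProbabilityTheory.indepFun_iff_map_prod_eq_prod_map_map
      hXm.aemeasurable hYm.aemeasurable).mp hindep
  -- moment integrability
  obtain ⟨a₀, ha₀⟩ := ha
  have hmom : ∀ e : Edge d, Integrable (fun J : Edge d → ℝ => |J e| ^ q) ν := by
    intro e
    have hm : Measurable fun J : Edge d → ℝ => |J e| ^ q :=
      (Real.continuous_rpow_const hq0).measurable.comp
        (measurable_abs.comp (measurable_pi_apply e))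
    refine ⟨hm.aestronglyMeasurable, ?_⟩
    rw [hasFiniteIntegral_iff_ofReal (Filter.Eventually.of_forall fun J =>
      Real.rpow_nonneg (abs_nonneg _) _)]
    exact lt_of_le_of_lt (ha₀ e) ENNReal.ofReal_lt_top
  have hmRq : Measurable fun t : ℝ => |t| ^ q :=
    (Real.continuous_rpow_const hq0).measurable.comp measurable_abs
  have hIntXq : Integrable (fun t : ℝ => |t| ^ q) μX :=
    (integrable_map_measure hmRq.aestronglyMeasurable hXm.aemeasurable).2 (hmom ebar)
  have hmYe : ∀ e : {e // e ∈ SE d Δ ebar},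
      Measurable fun r : {e // e ∈ SE d Δ ebar} → ℝ => |r e| ^ q := fun e =>
    (Real.continuous_rpow_const hq0).measurable.comp
      (measurable_abs.comp (measurable_pi_apply e))
  have hIntYe : ∀ e : {e // e ∈ SE d Δ ebar},
      Integrable (fun r : {e // e ∈ SE d Δ ebar} → ℝ => |r e| ^ q) μY := fun e =>
    (integrable_map_measure (hmYe e).aestronglyMeasurable hYm.aemeasurable).2 (hmom e.1)
  -- integrability of G on the product
  have hmapfst : (μX.prod μY).map Prod.fst = μX := by
    rw [Measure.map_fst_prod, measure_univ, one_smul]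
  have hmapsnd : (μX.prod μY).map Prod.snd = μY := by
    rw [Measure.map_snd_prod, measure_univ, one_smul]
  have hIfst : Integrable (fun z : ℝ × ({e // e ∈ SE d Δ ebar} → ℝ) => |z.1| ^ q)
      (μX.prod μY) := by
    have hiff := integrable_map_measure (μ := μX.prod μY) (f := Prod.fst)
      (g := fun t : ℝ => |t| ^ q) hmRq.aestronglyMeasurable measurable_fst.aemeasurable
    rw [hmapfst] at hiff
    exact hiff.1 hIntXq
  have hIsnd : ∀ e : {e // e ∈ SE d Δ ebar},
      Integrable (fun z : ℝ × ({e // e ∈ SE d Δ ebar} → ℝ) => |z.2 e| ^ q)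
        (μX.prod μY) := by
    intro e
    have hiff := integrable_map_measure (μ := μX.prod μY) (f := Prod.snd)
      (g := fun r : {e // e ∈ SE d Δ ebar} → ℝ => |r e| ^ q)
      (hmYe e).aestronglyMeasurable measurable_snd.aemeasurable
    rw [hmapsnd] at hiff
    exact hiff.1 (hIntYe e)
  have hIntbnd : Integrable (fun z : ℝ × ({e // e ∈ SE d Δ ebar} → ℝ) =>
      Kf d Δ ebar q z.1 z.2 + C0 d χ Δ ebar p) (μX.prod μY) := by
    have hsum : Integrable (fun z : ℝ × ({e // e ∈ SE d Δ ebar} → ℝ) =>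
        ∑ e ∈ (SE d Δ ebar).attach, |z.2 e| ^ q) (μX.prod μY) :=
      integrable_finset_sum _ fun e _ => hIsnd e
    exact (hIfst.add hsum).add (integrable_const _)
  have hIntG : Integrable G (μX.prod μY) := by
    refine hIntbnd.mono hGm.aestronglyMeasurable (Filter.Eventually.of_forall fun z => ?_)
    rw [Real.norm_eq_abs, Real.norm_eq_abs]
    exact (Gf_abs_le d χ Δ ebar hq hp hCp' z.1 z.2).trans (le_abs_self _)
  -- Jensen for each fixed environment r
  have hJen : ∀ r : {e // e ∈ SE d Δ ebar} → ℝ, G (0, r) ≤ ∫ t, G (t, r) ∂μX := by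
    intro r
    have hconv : ConvexOn ℝ Set.univ fun t => G (t, r) :=
      Gf_convex d χ Δ ebar hq hp hCp' r
    have hcont : ContinuousOn (fun t => G (t, r)) Set.univ :=
      hconv.continuousOn isOpen_univ
    have hid : Integrable (fun t : ℝ => t) μX :=
      (integrable_map_measure aestronglyMeasurable_id hXm.aemeasurable).2 (hint ebar)
    have hgr : Integrable (fun t => G (t, r)) μX := by
      refine (hIntXq.add (integrable_const
        ((∑ e ∈ (SE d Δ ebar).attach, |r e| ^ q) + C0 d χ Δ ebar p))).mono
        ((hGm.comp (measurable_id.prodMk measurable_const)).aestronglyMeasurable)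
        (Filter.Eventually.of_forall fun t => ?_)
      rw [Real.norm_eq_abs, Real.norm_eq_abs]
      refine (Gf_abs_le d χ Δ ebar hq hp hCp' t r).trans ?_
      refine le_trans (le_of_eq ?_) (le_abs_self _)
      simp only [Pi.add_apply, Kf]
      ring
    have hEX : ∫ t, t ∂μX = 0 := by
      rw [hμX]
      have hmp := integral_map (μ := ν) (φ := X) (f := fun t : ℝ => t)
        hXm.aemeasurable aestronglyMeasurable_id
      exact hmp.trans (hmean ebar)
    have hjen := hconv.map_integral_le hcont isClosed_univ
      (Filter.Eventually.of_forall fun x => Set.mem_univ x) hid hgr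
    rw [hEX] at hjen
    exact hjen
  -- identification of the two sides
  have hP1 : Pfun d χ Δ ebar ν 1 = ∫ J, G (X J, Y J) ∂ν := by
    unfold Pfun
    refine integral_congr_ae (Filter.Eventually.of_forall fun J => ?_)
    rw [hGdef]
    simp only [Gf, Wf]
    congr 2
    refine lintegral_congr fun σ => ?_
    congr 2
    rw [energy_decomp d Δ ebar h1 J σ]
    simp only [uu, hXdef, hYdef]
    ring
  have hP0 : Pfun d χ Δ ebar ν 0 = ∫ J, G (0, Y J) ∂ν := by
    unfold Pfun
    refine integral_congr_ae (Filter.Eventually.of_forall fun J => ?_)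
    rw [hGdef]
    simp only [Gf, Wf]
    congr 2
    refine lintegral_congr fun σ => ?_
    congr 2
    rw [energy_decomp d Δ ebar h1 J σ]
    simp only [uu, hYdef]
    ring
  have hstep1 : ∫ J, G (X J, Y J) ∂ν = ∫ z, G z ∂(μX.prod μY) := by
    rw [← hmap]
    exact (integral_map (hXm.prodMk hYm).aemeasurable hGm.aestronglyMeasurable).symm
  have hfub : ∫ z, G z ∂(μX.prod μY) = ∫ r, ∫ t, G (t, r) ∂μX ∂μY :=
    integral_prod_symm G hIntG
  have houter1 : Integrable (fun r => ∫ t, G (t, r) ∂μX) μY := hIntG.integral_prod_right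
  have houter0 : Integrable (fun r => G (0, r)) μY := by
    have hsumY : Integrable (fun r : {e // e ∈ SE d Δ ebar} → ℝ =>
        ∑ e ∈ (SE d Δ ebar).attach, |r e| ^ q) μY :=
      integrable_finset_sum _ fun e _ => hIntYe e
    refine (hsumY.add (integrable_const
      (|(0 : ℝ)| ^ q + C0 d χ Δ ebar p))).mono
      ((hGm.comp (measurable_const.prodMk measurable_id)).aestronglyMeasurable)
      (Filter.Eventually.of_forall fun r => ?_)
    rw [Real.norm_eq_abs, Real.norm_eq_abs]
    refine (Gf_abs_le d χ Δ ebar hq hp hCp' 0 r).trans ?_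
    refine le_trans (le_of_eq ?_) (le_abs_self _)
    simp only [Pi.add_apply, Kf]
    ring
  have hmono : ∫ r, G (0, r) ∂μY ≤ ∫ r, ∫ t, G (t, r) ∂μX ∂μY :=
    integral_mono houter0 houter1 fun r => hJen r
  have hlast : ∫ r, G (0, r) ∂μY = ∫ J, G (0, Y J) ∂ν := by
    rw [hμY]
    exact integral_map hYm.aemeasurable
      (hGm.comp (measurable_const.prodMk measurable_id)).aestronglyMeasurable
  calc Pfun d χ Δ ebar ν 0 = ∫ J, G (0, Y J) ∂ν := hP0
    _ = ∫ r, G (0, r) ∂μY := hlast.symm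
    _ ≤ ∫ r, ∫ t, G (t, r) ∂μX ∂μY := hmono
    _ = ∫ z, G z ∂(μX.prod μY) := hfub.symm
    _ = ∫ J, G (X J, Y J) ∂ν := hstep1.symm
    _ = Pfun d χ Δ ebar ν 1 := hP1.symm
end
end
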